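/- arXiv:1404.1036 — 5 statements merged into one kernel-verified Lean document; each statement's English description precedes it below -/
import Mathlib

section
/- The map d̃_i on permutations is an involution: applying d̃_i twice returns the original permutation. -/
open scoped Classical

/-- Swap the values `a` and `b` in a word. -/
def swapVals (a b : ℕ) (w : List ℕ) : List ℕ :=
  w.map fun x => if x = a then b else if x = b then a else x

/-- Elementary dual equivalence `d_i`: acts as the identity if `i` lies (positionally)
between `i-1` and `i+1`, and otherwise swaps `i` with the outermost of `i-1`, `i+1`. -/
def delem (i : ℕ) (w : List ℕ) : List ℕ :=
  let p := w.idxOf (i - 1)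
  let q := w.idxOf i
  let r := w.idxOf (i + 1)
  if (p < q ∧ q < r) ∨ (r < q ∧ q < p) then w
  else if (q < p ∧ p < r) ∨ (r < p ∧ p < q) then swapVals i (i + 1) w
  else swapVals i (i - 1) w

/-- The cyclic replacement `a ↦ b ↦ c ↦ a` on the letters of a word. -/
def cycVals (a b c : ℕ) (w : List ℕ) : List ℕ :=
  w.map fun x => if x = a then b else if x = b then c else if x = c then a else x

/-- The map `d̃_i`: identity if `i` lies between `i-1` and `i+1`, otherwise it cyclically
permutes the values `i-1, i, i+1` as in Assaf's construction. -/
def dtil (i : ℕ) (w : List ℕ) : List ℕ :=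
  let p := w.idxOf (i - 1)
  let q := w.idxOf i
  let r := w.idxOf (i + 1)
  if (p < q ∧ q < r) ∨ (r < q ∧ q < p) then w
  else if q < p ∧ q < r then
    (if p < r then cycVals i (i - 1) (i + 1) w else cycVals i (i + 1) (i - 1) w)
  else
    (if p < r then cycVals (i - 1) i (i + 1) w else cycVals (i + 1) i (i - 1) w)

/-- The standardization of a word: rank letters by value, ties broken left to right. -/
def stWord (w : List ℕ) : List ℕ :=
  (w.zipIdx.map Prod.swap).map fun p =>
    1 + ((w.zipIdx.map Prod.swap).filter fun q => q.2 < p.2 ∨ (q.2 = p.2 ∧ q.1 < p.1)).length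

/-- Unstandardization of a permutation: the value `i` is replaced by
`1 +` the number of `j < i` such that `j+1` occurs before `j`. -/
def unstPerm (π : List ℕ) : List ℕ :=
  π.map fun i =>
    1 + ((List.range (i - 1)).filter fun j => π.idxOf (j + 2) < π.idxOf (j + 1)).length

/-- Unstandardization of a word. -/
def unstWord (w : List ℕ) : List ℕ := unstPerm (stWord w)

/-- RSK row insertion of a value into a tableau (rows listed bottom row first). -/
def insertTab : List (List ℕ) → ℕ → List (List ℕ)
  | [], x => [[x]]
  | r :: rs, x =>
    match r.findIdx? (fun y => x < y) with
    | none => (r ++ [x]) :: rs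
    | some j => r.set j x :: insertTab rs (r.getD j 0)

/-- The RSK insertion tableau of a word. -/
def Ptab (w : List ℕ) : List (List ℕ) := w.foldl insertTab []

def UtabAux : ℕ → List ℕ → List (List ℕ)
  | _, [] => []
  | s, a :: rest => ((List.range a).map (· + s + 1)) :: UtabAux (s + a) rest

/-- The superstandard tableau `U_λ`: `1,…,n` filled along the rows of `λ`, bottom row first. -/
def Utab (lam : List ℕ) : List (List ℕ) := (UtabAux 0 lam).filter (· ≠ [])

/-- `w` is a Yamanouchi word of content `lam`. -/
def IsYam (lam : List ℕ) (w : List ℕ) : Prop :=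
  (∀ x ∈ w, 1 ≤ x) ∧
  (∀ i : ℕ, w.count (i + 1) = lam.getD i 0) ∧
  ∀ t : List ℕ, t <:+ w → ∀ i : ℕ, t.count (i + 2) ≤ t.count (i + 1)

/-- `lam` is a partition: weakly decreasing with positive parts. -/
def IsPartition (lam : List ℕ) : Prop :=
  lam.Pairwise (· ≥ ·) ∧ ∀ a ∈ lam, 0 < a

/-- Row reading word of a tableau (rows listed bottom first; read top row first). -/
def rwTab (T : List (List ℕ)) : List ℕ := T.reverse.flatten

def fillAux : List ℕ → List ℕ → List (List ℕ)
  | [], _ => []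
  | a :: rest, w => w.take a :: fillAux rest (w.drop a)

/-- Fill a shape (row lengths, bottom row first) with a word read in row reading order. -/
def fillTab (sh : List ℕ) (w : List ℕ) : List (List ℕ) := (fillAux sh.reverse w).reverse

/-- `T` is a standard Young tableau of partition shape (rows listed bottom first). -/
def IsSYT (T : List (List ℕ)) : Prop :=
  (T.map List.length).Pairwise (· ≥ ·) ∧ (∀ r ∈ T, r ≠ []) ∧
  (rwTab T).Perm (List.range' 1 (rwTab T).length) ∧
  (∀ r ∈ T, r.Pairwise (· < ·)) ∧
  ∀ k, k + 1 < T.length → ∀ j < (T.getD (k + 1) []).length,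
    (T.getD k []).getD j 0 < (T.getD (k + 1) []).getD j 0

/-- An elementary dual equivalence move on tableaux, via the row reading word. -/
def DEMove (T T' : List (List ℕ)) : Prop :=
  ∃ i, 1 < i ∧ i < (rwTab T).length ∧
    T' = fillTab (T.map List.length) (delem i (rwTab T))

/-- Dual equivalence of tableaux: the equivalence relation generated by the moves `d_i`. -/
def DualEquiv : List (List ℕ) → List (List ℕ) → Prop := Relation.EqvGen DEMove

/-- Row reading order on cells `(x, y)` of `ℤ × ℤ` (top rows first, left to right). -/
def ReadingOrder (c d : ℤ × ℤ) : Prop := d.2 < c.2 ∨ (c.2 = d.2 ∧ c.1 < d.1)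

/-- A diagram, presented as its list of cells in row reading order. -/
def IsDiagramList (δ : List (ℤ × ℤ)) : Prop := δ.Pairwise ReadingOrder

def leRO (c d : ℤ × ℤ) : Prop := c = d ∨ ReadingOrder c d

/-- `e` lies in the pistol of the cell `c`: between `c` and the position one row below `c`. -/
def InPistol (c e : ℤ × ℤ) : Prop := leRO c e ∧ leRO e (c.1, c.2 - 1)

/-- A set of indices (into the row reading order of `δ`) lies in a common pistol of `δ`. -/
def Pistoled (δ : List (ℤ × ℤ)) (S : List ℕ) : Prop :=
  ∃ c ∈ δ, ∀ i ∈ S, i < δ.length ∧ InPistol c (δ.getD i (0, 0))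

/-- The involution `D_i^δ` of Assaf. -/
noncomputable def Ddelta (δ : List (ℤ × ℤ)) (i : ℕ) (π : List ℕ) : List ℕ :=
  if Pistoled δ [π.idxOf (i - 1), π.idxOf i, π.idxOf (i + 1)] then dtil i π
  else delem i π

/-- The cell at index `j` of the filling `T_δ(w)` is a descent. -/
def IsDescentAt (δ : List (ℤ × ℤ)) (w : List ℕ) (j : ℕ) : Prop :=
  j < δ.length ∧ ∃ k < δ.length,
    δ.getD k (0, 0) = ((δ.getD j (0, 0)).1, (δ.getD j (0, 0)).2 - 1) ∧
    w.getD k 0 < w.getD j 0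

/-- The set of descent cells of the filling `T_δ(w)`. -/
def DesSet (δ : List (ℤ × ℤ)) (w : List ℕ) : Set (ℤ × ℤ) :=
  {c | ∃ j, j < δ.length ∧ δ.getD j (0, 0) = c ∧ IsDescentAt δ w j}

/-- Number of cells of `δ` strictly above `c` in its column. -/
def legOf (δ : List (ℤ × ℤ)) (c : ℤ × ℤ) : ℕ :=
  (δ.filter fun e => e.1 = c.1 ∧ c.2 < e.2).length

/-- The major index statistic `maj_δ`. -/
noncomputable def majD (δ : List (ℤ × ℤ)) (w : List ℕ) : ℕ :=
  ∑ j ∈ Finset.range δ.length,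
    if IsDescentAt δ w j then 1 + legOf δ (δ.getD j (0, 0)) else 0

/-- Indices `j < k` form an inversion triple of `T_δ(w)` (with the cell below `j`). -/
def InvTripleAt (δ : List (ℤ × ℤ)) (w : List ℕ) (j k : ℕ) : Prop :=
  j < k ∧ k < δ.length ∧
  (δ.getD j (0, 0)).2 = (δ.getD k (0, 0)).2 ∧
  ∃ m < δ.length, δ.getD m (0, 0) = ((δ.getD j (0, 0)).1, (δ.getD j (0, 0)).2 - 1) ∧
    ((w.getD m 0 < w.getD k 0 ∧ w.getD k 0 < w.getD j 0) ∨
     (w.getD j 0 ≤ w.getD m 0 ∧ w.getD m 0 < w.getD k 0) ∨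
     (w.getD k 0 < w.getD j 0 ∧ w.getD j 0 ≤ w.getD m 0))

/-- Inversion pair where the cell below the left cell is missing. -/
def InvPairBelowAt (δ : List (ℤ × ℤ)) (w : List ℕ) (j k : ℕ) : Prop :=
  j < k ∧ k < δ.length ∧
  (δ.getD j (0, 0)).2 = (δ.getD k (0, 0)).2 ∧
  ((δ.getD j (0, 0)).1, (δ.getD j (0, 0)).2 - 1) ∉ δ ∧
  w.getD k 0 < w.getD j 0

/-- Inversion pair where the upper-left cell of the triple is missing. -/
def InvPairAboveAt (δ : List (ℤ × ℤ)) (w : List ℕ) (k m : ℕ) : Prop :=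
  k < δ.length ∧ m < δ.length ∧
  (δ.getD k (0, 0)).2 = (δ.getD m (0, 0)).2 + 1 ∧
  (δ.getD m (0, 0)).1 < (δ.getD k (0, 0)).1 ∧
  ((δ.getD m (0, 0)).1, (δ.getD m (0, 0)).2 + 1) ∉ δ ∧
  w.getD m 0 < w.getD k 0

/-- The inversion statistic `inv_δ(w)`: inversion triples plus inversion pairs. -/
noncomputable def invD (δ : List (ℤ × ℤ)) (w : List ℕ) : ℕ :=
  ((Finset.range δ.length ×ˢ Finset.range δ.length).filter fun p =>
      InvTripleAt δ w p.1 p.2).card +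
  ((Finset.range δ.length ×ˢ Finset.range δ.length).filter fun p =>
      InvPairBelowAt δ w p.1 p.2).card +
  ((Finset.range δ.length ×ˢ Finset.range δ.length).filter fun p =>
      InvPairAboveAt δ w p.1 p.2).card

/-- The cells of the (French) partition diagram of `lam`, in row reading order. -/
def partitionDiagram (lam : List ℕ) : List (ℤ × ℤ) :=
  ((List.range lam.length).reverse.map fun r =>
    (List.range (lam.getD r 0)).map fun x => ((x : ℤ), (r : ℤ))).flatten

/-- Index (in `w`) of the `j`-th from last occurrence of the value `v` (`j ≥ 1`). -/
def posFromLast (w : List ℕ) (v j : ℕ) : ℕ :=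
  (((List.range w.length).filter fun p => w.getD p 0 = v).reverse).getD (j - 1) 0

/-- A Yamanouchi word `w` jams the diagram `δ`. -/
def Jams (δ : List (ℤ × ℤ)) (w : List ℕ) : Prop :=
  ∃ i j : ℕ, 1 ≤ i ∧ 1 ≤ j ∧ j ≤ w.count i ∧ j + 1 ≤ w.count (i + 1) ∧
    Pistoled δ [posFromLast w i j, posFromLast w (i + 1) (j + 1)]

/-- `p` occurs as a strict pattern of `π` at the (increasing) index list `idx`. -/
def StrictPatternAt (p : List ℕ) (π : List ℕ) (idx : List ℕ) : Prop :=
  idx.Pairwise (· < ·) ∧ (∀ i ∈ idx, i < π.length) ∧ idx.length = p.length ∧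
  ∃ k : ℕ, ∀ j < p.length, π.getD (idx.getD j 0) 0 = p.getD j 0 + k

/-- `γ` is a realizable descent set of `δ`. -/
def RealizableIn (γ : Finset (ℤ × ℤ)) (δ : List (ℤ × ℤ)) : Prop :=
  (∀ c ∈ γ, ((c.1, c.2 - 1) : ℤ × ℤ) ∈ δ) ∧
  ∀ x₁ x₂ lo hi : ℤ, x₁ < x₂ → lo < hi →
    ((x₁, hi) : ℤ × ℤ) ∉ γ → ((x₁, lo) : ℤ × ℤ) ∉ γ →
    (∀ j, lo < j → j < hi → ((x₁, j) : ℤ × ℤ) ∈ γ) →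
    ¬ ∀ j, lo < j → j ≤ hi → ((x₂, j) : ℤ × ℤ) ∈ γ

/-- Value of the leading filling at a cell: `1` plus the length of the maximal run of
cells of `γ` weakly below `c` in its column, i.e. `1` off a non-`γ` cell, and one plus
the value below on cells of `γ`. -/
noncomputable def wval (γ : Finset (ℤ × ℤ)) (c : ℤ × ℤ) : ℕ :=
  1 + ((Finset.range γ.card).filter fun m =>
    ∀ l ≤ m, ((c.1, c.2 - (l : ℤ)) : ℤ × ℤ) ∈ γ).card

-- STATEMENT 1
lemma indexOf_map (f : ℕ → ℕ) (hf : Function.Injective f) (w : List ℕ) (v : ℕ) :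
    (w.map f).idxOf (f v) = w.idxOf v := by
  induction w with
  | nil => simp
  | cons x t ih =>
    simp only [List.map_cons, List.idxOf_cons, ih]
    by_cases h : v = x
    · simp [h]
    · have h2 : f x ≠ f v := fun hh => h (hf hh).symm
      have h3 : x ≠ v := fun hh => h hh.symm
      rw [beq_eq_false_iff_ne.mpr h2, beq_eq_false_iff_ne.mpr h3]

lemma cyc_inj {a b c : ℕ} (hab : a ≠ b) (hbc : b ≠ c) (hac : a ≠ c) :
    Function.Injective (fun x => if x = a then b else if x = b then c else if x = c then a else x) := by
  intro x y h
  simp only at h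
  split_ifs at h <;> omega

lemma cyc_cyc {a b c : ℕ} (hab : a ≠ b) (hbc : b ≠ c) (hac : a ≠ c) (w : List ℕ) :
    cycVals b a c (cycVals a b c w) = w := by
  simp only [cycVals, List.map_map]
  conv_rhs => rw [← List.map_id w]
  apply List.map_congr_left
  intro x _
  simp only [Function.comp_apply, id]
  split_ifs <;> omega

-- index computation lemmas for cycVals
lemma cyc_indexOf_b {a b c : ℕ} (hab : a ≠ b) (hbc : b ≠ c) (hac : a ≠ c) (w : List ℕ) :
    (cycVals a b c w).idxOf b = w.idxOf a := by
  have := indexOf_map _ (cyc_inj hab hbc hac) w a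
  simpa [cycVals] using this

lemma cyc_indexOf_c {a b c : ℕ} (hab : a ≠ b) (hbc : b ≠ c) (hac : a ≠ c) (w : List ℕ) :
    (cycVals a b c w).idxOf c = w.idxOf b := by
  have := indexOf_map _ (cyc_inj hab hbc hac) w b
  simpa [cycVals, hab.symm] using this

lemma cyc_indexOf_a {a b c : ℕ} (hab : a ≠ b) (hbc : b ≠ c) (hac : a ≠ c) (w : List ℕ) :
    (cycVals a b c w).idxOf a = w.idxOf c := by
  have := indexOf_map _ (cyc_inj hab hbc hac) w c
  simpa [cycVals, hac.symm, Ne.symm hbc] using this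

theorem dtil_involutive (n i : ℕ) (π : List ℕ)
    (hπ : π.Perm (List.range' 1 n)) (h1 : 1 < i) (h2 : i < n) :
    dtil i (dtil i π) = π := by
  have hm : ∀ v, 1 ≤ v → v ≤ n → v ∈ π := by
    intro v hv1 hv2
    rw [hπ.mem_iff, List.mem_range'_1]
    omega
  have hm1 : (i - 1) ∈ π := hm _ (by omega) (by omega)
  have hm2 : i ∈ π := hm _ (by omega) (by omega)
  have hm3 : (i + 1) ∈ π := hm _ (by omega) (by omega)
  set p := π.idxOf (i - 1) with hp
  set q := π.idxOf i with hq
  set r := π.idxOf (i + 1) with hr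
  have hpq : p ≠ q := fun h => by
    have := (List.idxOf_inj hm1).mp h; omega
  have hqr : q ≠ r := fun h => by
    have := (List.idxOf_inj hm2).mp h; omega
  have hpr : p ≠ r := fun h => by
    have := (List.idxOf_inj hm1).mp h; omega
  have d1 : (i : ℕ) ≠ i - 1 := by omega
  have d2 : (i : ℕ) ≠ i + 1 := by omega
  have d3 : (i - 1 : ℕ) ≠ i + 1 := by omega
  by_cases hA : (p < q ∧ q < r) ∨ (r < q ∧ q < p)
  · have hd : dtil i π = π := by
      simp only [dtil, ← hp, ← hq, ← hr]
      rw [if_pos hA]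
    rw [hd, hd]
  · by_cases hB : q < p ∧ q < r
    · by_cases hC : p < r
      · -- π' = cycVals i (i-1) (i+1) π ; p' = q, q' = r, r' = p
        have hd : dtil i π = cycVals i (i - 1) (i + 1) π := by
          simp only [dtil, ← hp, ← hq, ← hr]
          rw [if_neg hA, if_pos hB, if_pos hC]
        rw [hd]
        simp only [dtil]
        have e1 : (cycVals i (i - 1) (i + 1) π).idxOf (i - 1) = q :=
          cyc_indexOf_b d1 d3 d2 π
        have e2 : (cycVals i (i - 1) (i + 1) π).idxOf (i + 1) = p :=
          cyc_indexOf_c d1 d3 d2 π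
        have e3 : (cycVals i (i - 1) (i + 1) π).idxOf i = r :=
          cyc_indexOf_a d1 d3 d2 π
        simp only [e1, e2, e3]
        rw [if_neg (by omega), if_neg (by omega), if_pos (by omega)]
        exact cyc_cyc d1 d3 d2 π
      · -- r < p ; π' = cycVals i (i+1) (i-1) π ; p' = r, q' = p, r' = q
        have hd : dtil i π = cycVals i (i + 1) (i - 1) π := by
          simp only [dtil, ← hp, ← hq, ← hr]
          rw [if_neg hA, if_pos hB, if_neg hC]
        rw [hd]
        simp only [dtil]
        have e1 : (cycVals i (i + 1) (i - 1) π).idxOf (i - 1) = r :=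
          cyc_indexOf_c d2 (Ne.symm d3) d1 π
        have e2 : (cycVals i (i + 1) (i - 1) π).idxOf (i + 1) = q :=
          cyc_indexOf_b d2 (Ne.symm d3) d1 π
        have e3 : (cycVals i (i + 1) (i - 1) π).idxOf i = p :=
          cyc_indexOf_a d2 (Ne.symm d3) d1 π
        simp only [e1, e2, e3]
        rw [if_neg (by omega), if_neg (by omega), if_neg (by omega)]
        exact cyc_cyc d2 (Ne.symm d3) d1 π
    · -- q is largest: p < q and r < q
      have hq1 : p < q ∧ r < q := by omega
      by_cases hC : p < r
      · -- π' = cycVals (i-1) i (i+1) π ; p' = r, q' = p, r' = q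
        have hd : dtil i π = cycVals (i - 1) i (i + 1) π := by
          simp only [dtil, ← hp, ← hq, ← hr]
          rw [if_neg hA, if_neg hB, if_pos hC]
        rw [hd]
        simp only [dtil]
        have e1 : (cycVals (i - 1) i (i + 1) π).idxOf (i - 1) = r :=
          cyc_indexOf_a (Ne.symm d1) d2 d3 π
        have e2 : (cycVals (i - 1) i (i + 1) π).idxOf i = p :=
          cyc_indexOf_b (Ne.symm d1) d2 d3 π
        have e3 : (cycVals (i - 1) i (i + 1) π).idxOf (i + 1) = q :=
          cyc_indexOf_c (Ne.symm d1) d2 d3 π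
        simp only [e1, e2, e3]
        rw [if_neg (by omega), if_pos (by omega), if_pos (by omega)]
        exact cyc_cyc (Ne.symm d1) d2 d3 π
      · -- r < p ; π' = cycVals (i+1) i (i-1) π ; p' = q, q' = r, r' = p
        have hd : dtil i π = cycVals (i + 1) i (i - 1) π := by
          simp only [dtil, ← hp, ← hq, ← hr]
          rw [if_neg hA, if_neg hB, if_neg hC]
        rw [hd]
        simp only [dtil]
        have e1 : (cycVals (i + 1) i (i - 1) π).idxOf (i - 1) = q :=
          cyc_indexOf_c (Ne.symm d2) d1 (Ne.symm d3) π
        have e2 : (cycVals (i + 1) i (i - 1) π).idxOf i = r :=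
          cyc_indexOf_b (Ne.symm d2) d1 (Ne.symm d3) π
        have e3 : (cycVals (i + 1) i (i - 1) π).idxOf (i + 1) = p :=
          cyc_indexOf_a (Ne.symm d2) d1 (Ne.symm d3) π
        simp only [e1, e2, e3]
        rw [if_neg (by omega), if_pos (by omega), if_neg (by omega)]
        exact cyc_cyc (Ne.symm d2) d1 (Ne.symm d3) π
end

section
/- If π' = D_i^δ(π), then the fillings T_δ(π) and T_δ(π') have the same descent set: Des_δ(π) = Des_δ(π'). Consequently maj_δ is constant on orbits of D_i^δ. -/
open scoped Classical

section DdeltaAux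

lemma getD_map_aux (f : ℕ → ℕ) (w : List ℕ) (t : ℕ) (ht : t < w.length) :
    (w.map f).getD t 0 = f (w.getD t 0) := by
  rw [List.getD_eq_getElem w 0 ht, List.getD_eq_getElem _ 0 (by simpa using ht)]
  simp

lemma getD_swapVals (a b : ℕ) (w : List ℕ) (t : ℕ) (ht : t < w.length) :
    (swapVals a b w).getD t 0 =
      if w.getD t 0 = a then b else if w.getD t 0 = b then a else w.getD t 0 := by
  unfold swapVals; rw [getD_map_aux _ _ _ ht]

lemma getD_cycVals (a b c : ℕ) (w : List ℕ) (t : ℕ) (ht : t < w.length) :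
    (cycVals a b c w).getD t 0 =
      if w.getD t 0 = a then b else if w.getD t 0 = b then c
        else if w.getD t 0 = c then a else w.getD t 0 := by
  unfold cycVals; rw [getD_map_aux _ _ _ ht]

lemma RO_asymm_aux {c d : ℤ × ℤ} (h : ReadingOrder c d) : ¬ ReadingOrder d c := by
  unfold ReadingOrder at *; omega

lemma RO_getD_aux {δ : List (ℤ×ℤ)} (hδ : IsDiagramList δ) {s t : ℕ} (hst : s < t)
    (ht : t < δ.length) : ReadingOrder (δ.getD s (0,0)) (δ.getD t (0,0)) := by
  rw [List.getD_eq_getElem _ _ (hst.trans ht), List.getD_eq_getElem _ _ ht]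
  exact List.pairwise_iff_getElem.mp hδ s t _ _ hst

lemma index_le_aux {δ : List (ℤ×ℤ)} (hδ : IsDiagramList δ) {s t : ℕ} (hs : s < δ.length)
    (ht : t < δ.length) (h : leRO (δ.getD s (0,0)) (δ.getD t (0,0))) : s ≤ t := by
  by_contra hc
  push_neg at hc
  have h2 := RO_getD_aux hδ hc hs
  rcases h with h | h
  · rw [← h] at h2; exact RO_asymm_aux h2 h2
  · exact RO_asymm_aux h h2

lemma leRO_getD_aux {δ : List (ℤ×ℤ)} (hδ : IsDiagramList δ) {s t : ℕ} (hst : s ≤ t)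
    (ht : t < δ.length) : leRO (δ.getD s (0,0)) (δ.getD t (0,0)) := by
  rcases eq_or_lt_of_le hst with h | h
  · exact Or.inl (by rw [h])
  · exact Or.inr (RO_getD_aux hδ h ht)

lemma dtil_eq_aux (i : ℕ) (w : List ℕ) :
    dtil i w =
      if (w.idxOf (i-1) < w.idxOf i ∧ w.idxOf i < w.idxOf (i+1)) ∨
         (w.idxOf (i+1) < w.idxOf i ∧ w.idxOf i < w.idxOf (i-1)) then w
      else if w.idxOf i < w.idxOf (i-1) ∧ w.idxOf i < w.idxOf (i+1) then
        (if w.idxOf (i-1) < w.idxOf (i+1) then cycVals i (i - 1) (i + 1) w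
         else cycVals i (i + 1) (i - 1) w)
      else
        (if w.idxOf (i-1) < w.idxOf (i+1) then cycVals (i - 1) i (i + 1) w
         else cycVals (i + 1) i (i - 1) w) := rfl

lemma delem_eq_aux (i : ℕ) (w : List ℕ) :
    delem i w =
      if (w.idxOf (i-1) < w.idxOf i ∧ w.idxOf i < w.idxOf (i+1)) ∨
         (w.idxOf (i+1) < w.idxOf i ∧ w.idxOf i < w.idxOf (i-1)) then w
      else if (w.idxOf i < w.idxOf (i-1) ∧ w.idxOf (i-1) < w.idxOf (i+1)) ∨
              (w.idxOf (i+1) < w.idxOf (i-1) ∧ w.idxOf (i-1) < w.idxOf i) then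
        swapVals i (i + 1) w
      else swapVals i (i - 1) w := rfl

lemma cycA_aux (i u v j k p q r : ℕ) (h1 : 1 < i) (huv : u ≠ v) (hjk : j < k)
    (hpq : p ≠ q) (hqr : q ≠ r) (hpr : p ≠ r)
    (hkp : u = i - 1 → k = p) (hkq : u = i → k = q) (hkr : u = i + 1 → k = r)
    (hjp : v = i - 1 → j = p) (hjq : v = i → j = q) (hjr : v = i + 1 → j = r)
    (hB : (i - 1 ≤ u ∧ u ≤ i + 1) ∧ (i - 1 ≤ v ∧ v ≤ i + 1) →
      j ≤ p ∧ p ≤ k ∧ j ≤ q ∧ q ≤ k ∧ j ≤ r ∧ r ≤ k) (c2 : q < p ∧ q < r) (c3 : p < r) :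
    (u < v ↔ (if u = i then i - 1 else if u = i - 1 then i + 1 else if u = i + 1 then i else u) < (if v = i then i - 1 else if v = i - 1 then i + 1 else if v = i + 1 then i else v)) := by
  split_ifs <;> omega

lemma cycB_aux (i u v j k p q r : ℕ) (h1 : 1 < i) (huv : u ≠ v) (hjk : j < k)
    (hpq : p ≠ q) (hqr : q ≠ r) (hpr : p ≠ r)
    (hkp : u = i - 1 → k = p) (hkq : u = i → k = q) (hkr : u = i + 1 → k = r)
    (hjp : v = i - 1 → j = p) (hjq : v = i → j = q) (hjr : v = i + 1 → j = r)
    (hB : (i - 1 ≤ u ∧ u ≤ i + 1) ∧ (i - 1 ≤ v ∧ v ≤ i + 1) →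
      j ≤ p ∧ p ≤ k ∧ j ≤ q ∧ q ≤ k ∧ j ≤ r ∧ r ≤ k) (c2 : q < p ∧ q < r) (c3 : ¬ p < r) :
    (u < v ↔ (if u = i then i + 1 else if u = i + 1 then i - 1 else if u = i - 1 then i else u) < (if v = i then i + 1 else if v = i + 1 then i - 1 else if v = i - 1 then i else v)) := by
  split_ifs <;> omega

lemma cycC_aux (i u v j k p q r : ℕ) (h1 : 1 < i) (huv : u ≠ v) (hjk : j < k)
    (hpq : p ≠ q) (hqr : q ≠ r) (hpr : p ≠ r)
    (hkp : u = i - 1 → k = p) (hkq : u = i → k = q) (hkr : u = i + 1 → k = r)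
    (hjp : v = i - 1 → j = p) (hjq : v = i → j = q) (hjr : v = i + 1 → j = r)
    (hB : (i - 1 ≤ u ∧ u ≤ i + 1) ∧ (i - 1 ≤ v ∧ v ≤ i + 1) →
      j ≤ p ∧ p ≤ k ∧ j ≤ q ∧ q ≤ k ∧ j ≤ r ∧ r ≤ k) (c1 : ¬((p < q ∧ q < r) ∨ (r < q ∧ q < p))) (c2 : ¬(q < p ∧ q < r)) (c4 : p < r) :
    (u < v ↔ (if u = i - 1 then i else if u = i then i + 1 else if u = i + 1 then i - 1 else u) < (if v = i - 1 then i else if v = i then i + 1 else if v = i + 1 then i - 1 else v)) := by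
  split_ifs <;> omega

lemma cycD_aux (i u v j k p q r : ℕ) (h1 : 1 < i) (huv : u ≠ v) (hjk : j < k)
    (hpq : p ≠ q) (hqr : q ≠ r) (hpr : p ≠ r)
    (hkp : u = i - 1 → k = p) (hkq : u = i → k = q) (hkr : u = i + 1 → k = r)
    (hjp : v = i - 1 → j = p) (hjq : v = i → j = q) (hjr : v = i + 1 → j = r)
    (hB : (i - 1 ≤ u ∧ u ≤ i + 1) ∧ (i - 1 ≤ v ∧ v ≤ i + 1) →
      j ≤ p ∧ p ≤ k ∧ j ≤ q ∧ q ≤ k ∧ j ≤ r ∧ r ≤ k) (c1 : ¬((p < q ∧ q < r) ∨ (r < q ∧ q < p))) (c2 : ¬(q < p ∧ q < r)) (c4 : ¬ p < r) :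
    (u < v ↔ (if u = i + 1 then i else if u = i then i - 1 else if u = i - 1 then i + 1 else u) < (if v = i + 1 then i else if v = i then i - 1 else if v = i - 1 then i + 1 else v)) := by
  split_ifs <;> omega

lemma swapE_aux (i u v j k p q r : ℕ) (h1 : 1 < i) (huv : u ≠ v) (hjk : j < k)
    (hpq : p ≠ q) (hqr : q ≠ r) (hpr : p ≠ r)
    (hkp : u = i - 1 → k = p) (hkq : u = i → k = q) (hkr : u = i + 1 → k = r)
    (hjp : v = i - 1 → j = p) (hjq : v = i → j = q) (hjr : v = i + 1 → j = r)
    (hnp : ¬(j ≤ p ∧ p ≤ k ∧ j ≤ q ∧ q ≤ k ∧ j ≤ r ∧ r ≤ k)) (c2 : (q < p ∧ p < r) ∨ (r < p ∧ p < q)) :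
    (u < v ↔ (if u = i then i + 1 else if u = i + 1 then i else u) < (if v = i then i + 1 else if v = i + 1 then i else v)) := by
  split_ifs <;> omega

lemma swapF_aux (i u v j k p q r : ℕ) (h1 : 1 < i) (huv : u ≠ v) (hjk : j < k)
    (hpq : p ≠ q) (hqr : q ≠ r) (hpr : p ≠ r)
    (hkp : u = i - 1 → k = p) (hkq : u = i → k = q) (hkr : u = i + 1 → k = r)
    (hjp : v = i - 1 → j = p) (hjq : v = i → j = q) (hjr : v = i + 1 → j = r)
    (hnp : ¬(j ≤ p ∧ p ≤ k ∧ j ≤ q ∧ q ≤ k ∧ j ≤ r ∧ r ≤ k)) (c1 : ¬((p < q ∧ q < r) ∨ (r < q ∧ q < p)))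
    (c2 : ¬((q < p ∧ p < r) ∨ (r < p ∧ p < q))) :
    (u < v ↔ (if u = i then i - 1 else if u = i - 1 then i else u) < (if v = i then i - 1 else if v = i - 1 then i else v)) := by
  split_ifs <;> omega

set_option maxHeartbeats 1000000 in
lemma val_iff_aux (δ : List (ℤ × ℤ)) (hδ : IsDiagramList δ) (i : ℕ) (π : List ℕ)
    (hπ : π.Perm (List.range' 1 δ.length)) (h1 : 1 < i) (h2 : i < δ.length)
    {j k : ℕ} (hj : j < δ.length) (hk : k < δ.length)
    (hcell : δ.getD k (0,0) = ((δ.getD j (0,0)).1, (δ.getD j (0,0)).2 - 1)) :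
    (π.getD k 0 < π.getD j 0 ↔ (Ddelta δ i π).getD k 0 < (Ddelta δ i π).getD j 0) := by
  have hlen : π.length = δ.length := by simpa using hπ.length_eq
  have hnd : π.Nodup := hπ.nodup_iff.mpr (List.nodup_range' _ (by omega))
  have hmemπ : ∀ v : ℕ, 1 ≤ v → v < δ.length + 1 → v ∈ π := fun v hv1 hv2 =>
    hπ.mem_iff.mpr (List.mem_range'_1.mpr ⟨hv1, by omega⟩)
  have hidx : ∀ t, t < π.length → π.idxOf (π.getD t 0) = t := by
    intro t ht; rw [List.getD_eq_getElem _ _ ht]; exact List.Nodup.idxOf_getElem hnd t ht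
  set p := π.idxOf (i - 1) with hpdef
  set q := π.idxOf i with hqdef
  set r := π.idxOf (i + 1) with hrdef
  have hp : p < π.length := List.idxOf_lt_length_iff.mpr (hmemπ _ (by omega) (by omega))
  have hq : q < π.length := List.idxOf_lt_length_iff.mpr (hmemπ _ (by omega) (by omega))
  have hr : r < π.length := List.idxOf_lt_length_iff.mpr (hmemπ _ (by omega) (by omega))
  have hgp : π.getD p 0 = i - 1 := by
    rw [List.getD_eq_getElem _ _ hp]; exact List.getElem_idxOf hp
  have hgq : π.getD q 0 = i := by
    rw [List.getD_eq_getElem _ _ hq]; exact List.getElem_idxOf hq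
  have hgr : π.getD r 0 = i + 1 := by
    rw [List.getD_eq_getElem _ _ hr]; exact List.getElem_idxOf hr
  set u := π.getD k 0 with hudef
  set v := π.getD j 0 with hvdef
  -- j < k
  have hROjk : ReadingOrder (δ.getD j (0,0)) (δ.getD k (0,0)) := by
    rw [hcell]; unfold ReadingOrder; left; simp
  have hjk : j < k := by
    by_contra hc
    push_neg at hc
    rcases eq_or_lt_of_le hc with h | h
    · rw [h] at hROjk; exact RO_asymm_aux hROjk hROjk
    · exact RO_asymm_aux hROjk (RO_getD_aux hδ h hj)
  have huv : u ≠ v := by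
    intro h
    have e1 := hidx k (by omega)
    have e2 := hidx j (by omega)
    rw [← hudef] at e1; rw [← hvdef, ← h] at e2
    omega
  -- value-position implications
  have hk_p : u = i - 1 → k = p := by
    intro h; have e := hidx k (by omega); rw [← hudef, h] at e; omega
  have hk_q : u = i → k = q := by
    intro h; have e := hidx k (by omega); rw [← hudef, h] at e; omega
  have hk_r : u = i + 1 → k = r := by
    intro h; have e := hidx k (by omega); rw [← hudef, h] at e; omega
  have hj_p : v = i - 1 → j = p := by
    intro h; have e := hidx j (by omega); rw [← hvdef, h] at e; omega
  have hj_q : v = i → j = q := by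
    intro h; have e := hidx j (by omega); rw [← hvdef, h] at e; omega
  have hj_r : v = i + 1 → j = r := by
    intro h; have e := hidx j (by omega); rw [← hvdef, h] at e; omega
  have hpq : p ≠ q := by intro h; rw [h] at hgp; omega
  have hqr : q ≠ r := by intro h; rw [h] at hgq; omega
  have hpr : p ≠ r := by intro h; rw [h] at hgp; omega
  -- making a pistol from bounds
  have hmk : j ≤ p → p ≤ k → j ≤ q → q ≤ k → j ≤ r → r ≤ k → Pistoled δ [p, q, r] := by
    intro b1 b2 b3 b4 b5 b6
    refine ⟨δ.getD j (0,0), by rw [List.getD_eq_getElem _ _ hj]; exact List.getElem_mem _, ?_⟩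
    intro t ht
    have hbt : j ≤ t ∧ t ≤ k := by
      simp only [List.mem_cons, List.mem_singleton, List.not_mem_nil] at ht
      rcases ht with rfl | rfl | rfl | f
      · exact ⟨b1, b2⟩
      · exact ⟨b3, b4⟩
      · exact ⟨b5, b6⟩
      · exact f.elim
    refine ⟨by omega, leRO_getD_aux hδ hbt.1 (by omega), ?_⟩
    rw [← hcell]
    exact leRO_getD_aux hδ hbt.2 hk
  -- the pistol condition forces bounds (when both u, v are in the triple)
  have hbnd : Pistoled δ [p, q, r] →
      ((i - 1 ≤ u ∧ u ≤ i + 1) ∧ (i - 1 ≤ v ∧ v ≤ i + 1)) →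
      j ≤ p ∧ p ≤ k ∧ j ≤ q ∧ q ≤ k ∧ j ≤ r ∧ r ≤ k := by
    rintro ⟨c, hcδ, hc3⟩ hS
    have hcp := (hc3 p (by simp)).2
    have hcq := (hc3 q (by simp)).2
    have hcr := (hc3 r (by simp)).2
    have hj3 : j = p ∨ j = q ∨ j = r := by
      clear hc3 hcp hcq hcr hcδ hδ hπ hcell hmk hnd hidx hmemπ; omega
    have hk3 : k = p ∨ k = q ∨ k = r := by
      clear hc3 hcp hcq hcr hcδ hδ hπ hcell hmk hnd hidx hmemπ; omega
    have hcj : InPistol c (δ.getD j (0,0)) := by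
      rcases hj3 with h | h | h <;> rw [h] <;> assumption
    have hck : InPistol c (δ.getD k (0,0)) := by
      rcases hk3 with h | h | h <;> rw [h] <;> assumption
    have hceq : c = δ.getD j (0,0) := by
      obtain ⟨hc1, _⟩ := hcj
      obtain ⟨_, hc4⟩ := hck
      rw [hcell] at hc4
      have hle : leRO (δ.getD j (0,0)) c := by
        rcases hc4 with h | h
        · left
          rw [Prod.mk.injEq] at h
          obtain ⟨e1, e2⟩ := h
          exact Prod.ext e1 (by omega)
        · right
          unfold ReadingOrder at h ⊢
          simp only at h
          omega
      rcases hc1 with h | h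
      · exact h
      · rcases hle with h' | h'
        · exact h'.symm
        · exact absurd h (RO_asymm_aux h')
    have hbp : j ≤ p ∧ p ≤ k := by
      rcases hceq ▸ hcp with ⟨c1, c2⟩
      refine ⟨index_le_aux hδ hj (by omega) c1, index_le_aux hδ (by omega) hk ?_⟩
      rw [← hcell] at c2; exact c2
    have hbq : j ≤ q ∧ q ≤ k := by
      rcases hceq ▸ hcq with ⟨c1, c2⟩
      refine ⟨index_le_aux hδ hj (by omega) c1, index_le_aux hδ (by omega) hk ?_⟩
      rw [← hcell] at c2; exact c2
    have hbr : j ≤ r ∧ r ≤ k := by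
      rcases hceq ▸ hcr with ⟨c1, c2⟩
      refine ⟨index_le_aux hδ hj (by omega) c1, index_le_aux hδ (by omega) hk ?_⟩
      rw [← hcell] at c2; exact c2
    exact ⟨hbp.1, hbp.2, hbq.1, hbq.2, hbr.1, hbr.2⟩
  unfold Ddelta
  rw [← hpdef, ← hqdef, ← hrdef]
  split_ifs with hP
  · -- pistoled case : dtil
    have hB := hbnd hP
    rw [dtil_eq_aux]
    rw [← hpdef, ← hqdef, ← hrdef]
    split_ifs with c1 c2 c3 c4
    · exact Iff.rfl
    · rw [getD_cycVals i (i-1) (i+1) π k (by omega), getD_cycVals i (i-1) (i+1) π j (by omega),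
        ← hudef, ← hvdef]
      exact cycA_aux i u v j k p q r h1 huv hjk hpq hqr hpr hk_p hk_q hk_r hj_p hj_q hj_r hB c2 c3
    · rw [getD_cycVals i (i+1) (i-1) π k (by omega), getD_cycVals i (i+1) (i-1) π j (by omega),
        ← hudef, ← hvdef]
      exact cycB_aux i u v j k p q r h1 huv hjk hpq hqr hpr hk_p hk_q hk_r hj_p hj_q hj_r hB c2 c3
    · rw [getD_cycVals (i-1) i (i+1) π k (by omega), getD_cycVals (i-1) i (i+1) π j (by omega),
        ← hudef, ← hvdef]
      exact cycC_aux i u v j k p q r h1 huv hjk hpq hqr hpr hk_p hk_q hk_r hj_p hj_q hj_r hB c1 c2 c4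
    · rw [getD_cycVals (i+1) i (i-1) π k (by omega), getD_cycVals (i+1) i (i-1) π j (by omega),
        ← hudef, ← hvdef]
      exact cycD_aux i u v j k p q r h1 huv hjk hpq hqr hpr hk_p hk_q hk_r hj_p hj_q hj_r hB c1 c2 c4
  · -- not pistoled : delem
    have hnp : ¬(j ≤ p ∧ p ≤ k ∧ j ≤ q ∧ q ≤ k ∧ j ≤ r ∧ r ≤ k) := by
      intro h; exact hP (hmk h.1 h.2.1 h.2.2.1 h.2.2.2.1 h.2.2.2.2.1 h.2.2.2.2.2)
    rw [delem_eq_aux]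
    rw [← hpdef, ← hqdef, ← hrdef]
    split_ifs with c1 c2
    · exact Iff.rfl
    · rw [getD_swapVals i (i+1) π k (by omega), getD_swapVals i (i+1) π j (by omega),
        ← hudef, ← hvdef]
      exact swapE_aux i u v j k p q r h1 huv hjk hpq hqr hpr hk_p hk_q hk_r hj_p hj_q hj_r hnp c2
    · rw [getD_swapVals i (i-1) π k (by omega), getD_swapVals i (i-1) π j (by omega),
        ← hudef, ← hvdef]
      exact swapF_aux i u v j k p q r h1 huv hjk hpq hqr hpr hk_p hk_q hk_r hj_p hj_q hj_r hnp c1 c2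

end DdeltaAux

-- STATEMENT 10
theorem Ddelta_preserves_des (δ : List (ℤ × ℤ)) (hδ : IsDiagramList δ) (i : ℕ)
    (π π' : List ℕ) (hπ : π.Perm (List.range' 1 δ.length))
    (h1 : 1 < i) (h2 : i < δ.length) (hπ' : π' = Ddelta δ i π) :
    DesSet δ π = DesSet δ π' ∧ majD δ π = majD δ π' := by
  subst hπ'
  have hiff : ∀ j, IsDescentAt δ π j ↔ IsDescentAt δ (Ddelta δ i π) j := by
    intro j
    unfold IsDescentAt
    constructor
    · rintro ⟨hj, k, hk, hc, hv⟩
      exact ⟨hj, k, hk, hc, (val_iff_aux δ hδ i π hπ h1 h2 hj hk hc).mp hv⟩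
    · rintro ⟨hj, k, hk, hc, hv⟩
      exact ⟨hj, k, hk, hc, (val_iff_aux δ hδ i π hπ h1 h2 hj hk hc).mpr hv⟩
  constructor
  · ext c
    simp only [DesSet, Set.mem_setOf_eq]
    constructor <;> rintro ⟨j, ha, hb, hc⟩
    · exact ⟨j, ha, hb, (hiff j).mp hc⟩
    · exact ⟨j, ha, hb, (hiff j).mpr hc⟩
  · unfold majD
    apply Finset.sum_congr rfl
    intro j hj
    by_cases h : IsDescentAt δ π j
    · rw [if_pos h, if_pos ((hiff j).mp h)]
    · rw [if_neg h, if_neg (fun hh => h ((hiff j).mpr hh))]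
end

section
/- If π' = D_i^δ(π), then inv_δ(π) = inv_δ(π'), i.e., the inversion statistic is constant on orbits of D_i^δ. -/
open scoped Classical

namespace InvPrf

variable (δ : List (ℤ × ℤ))

/-- The cell of `δ` at reading-order index `j`. -/
def cel (j : ℕ) : ℤ × ℤ := δ.getD j (0, 0)

/-- The cell directly below the cell at index `j`. -/
def bel (j : ℕ) : ℤ × ℤ := ((cel δ j).1, (cel δ j).2 - 1)

/-- The index of the cell directly below the cell at index `j` (when present). -/
def mIdx (j : ℕ) : ℕ := @List.idxOf _ instBEqOfDecidableEq (bel δ j) δ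

/-- Number of cells strictly to the right of cell `v` in its row. -/
noncomputable def Rr (v : ℕ) : ℕ :=
  ((Finset.range δ.length).filter fun k => v < k ∧ (cel δ k).2 = (cel δ v).2).card

/-- The multiplicity with which the comparison `w u > w v` occurs in `invD`. -/
noncomputable def Nc (u v : ℕ) : ℕ :=
  (if (cel δ u).2 = (cel δ v).2 ∧ (cel δ u).1 < (cel δ v).1 then 1 else 0) +
  (if (cel δ u).2 = (cel δ v).2 + 1 ∧ (cel δ v).1 < (cel δ u).1 then 1 else 0) +
  (if cel δ u = bel δ v then Rr δ v else 0)

/-- Indicator of `w v < w u`. -/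
noncomputable def ind (w : List ℕ) (u v : ℕ) : ℕ := if w.getD v 0 < w.getD u 0 then 1 else 0

noncomputable def Gs (w : List ℕ) : ℕ :=
  ∑ x ∈ Finset.range δ.length ×ˢ Finset.range δ.length, Nc δ x.1 x.2 * ind w x.1 x.2

/-- Configuration of an inversion triple: `j < k` in the same row with a cell below `j`. -/
def TCcfg (j k : ℕ) : Prop :=
  j < k ∧ k < δ.length ∧ (cel δ j).2 = (cel δ k).2 ∧ bel δ j ∈ δ

noncomputable def TCcard : ℕ :=
  ((Finset.range δ.length ×ˢ Finset.range δ.length).filter fun x => TCcfg δ x.1 x.2).card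

section Sorted
variable (hδ : IsDiagramList δ)
include hδ

lemma nodupδ : δ.Nodup := by
  have := hδ
  unfold IsDiagramList at this
  refine List.Pairwise.imp ?_ this
  intro a b hro hab
  subst hab
  unfold ReadingOrder at hro
  omega

omit hδ in
lemma cel_mem {j : ℕ} (hj : j < δ.length) : cel δ j ∈ δ := by
  rw [cel, List.getD_eq_getElem _ _ hj]; exact List.getElem_mem _

lemma cel_ro {u v : ℕ} (huv : u < v) (hv : v < δ.length) :
    ReadingOrder (cel δ u) (cel δ v) := by
  have h1 : cel δ u = δ.get ⟨u, huv.trans hv⟩ := by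
    rw [cel, List.getD_eq_getElem _ _ (huv.trans hv)]; rfl
  have h2 : cel δ v = δ.get ⟨v, hv⟩ := by
    rw [cel, List.getD_eq_getElem _ _ hv]; rfl
  rw [h1, h2]
  exact List.Pairwise.rel_get_of_lt hδ huv

lemma cel_inj {u v : ℕ} (hu : u < δ.length) (hv : v < δ.length)
    (h : cel δ u = cel δ v) : u = v := by
  simp only [cel] at h
  rw [List.getD_eq_getElem _ _ hu, List.getD_eq_getElem _ _ hv] at h
  exact (nodupδ δ hδ).getElem_inj_iff.mp h

lemma lt_of_ro {u v : ℕ} (hu : u < δ.length) (hv : v < δ.length)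
    (h : ReadingOrder (cel δ u) (cel δ v)) : u < v := by
  rcases lt_trichotomy u v with h' | h' | h'
  · exact h'
  · subst h'; unfold ReadingOrder at h; omega
  · have := cel_ro δ hδ h' hu
    unfold ReadingOrder at h this
    omega

omit hδ in
lemma mIdx_lt {j : ℕ} (h : bel δ j ∈ δ) : mIdx δ j < δ.length := by
  rw [mIdx]; exact (@List.idxOf_lt_length_iff _ instBEqOfDecidableEq _ _ _).mpr h

omit hδ in
lemma cel_mIdx {j : ℕ} (h : bel δ j ∈ δ) : cel δ (mIdx δ j) = bel δ j := by
  rw [cel, mIdx, List.getD_eq_getElem _ _ ((@List.idxOf_lt_length_iff _ instBEqOfDecidableEq _ _ _).mpr h)]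
  exact @List.getElem_idxOf _ instBEqOfDecidableEq _ _ _ _

lemma mIdx_unique {j m : ℕ} (hm : m < δ.length) (h : cel δ m = bel δ j) : m = mIdx δ j := by
  have hmem : bel δ j ∈ δ := h ▸ cel_mem (δ := δ) hm
  exact cel_inj δ hδ hm (mIdx_lt (δ := δ) hmem) (h.trans (cel_mIdx (δ := δ) hmem).symm)

lemma indexOf_cel {j : ℕ} (hj : j < δ.length) : @List.idxOf _ instBEqOfDecidableEq (cel δ j) δ = j := by
  have hmem : cel δ j ∈ δ := cel_mem (δ := δ) hj
  have h2 : @List.idxOf _ instBEqOfDecidableEq (cel δ j) δ < δ.length :=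
    (@List.idxOf_lt_length_iff _ instBEqOfDecidableEq _ _ _).mpr hmem
  refine cel_inj δ hδ h2 hj ?_
  conv_lhs => rw [cel]
  rw [List.getD_eq_getElem _ _ h2]
  exact @List.getElem_idxOf _ instBEqOfDecidableEq _ _ _ _

end Sorted

/-- Configuration of an inversion pair with missing cell below. -/
def P1cfg (j k : ℕ) : Prop :=
  j < k ∧ k < δ.length ∧ (cel δ j).2 = (cel δ k).2 ∧ bel δ j ∉ δ

/-- `u` is in the row above `v`, strictly to the right. -/
def diag (u v : ℕ) : Prop :=
  (cel δ u).2 = (cel δ v).2 + 1 ∧ (cel δ v).1 < (cel δ u).1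

/-- The cell directly above cell `v`. -/
def abv (v : ℕ) : ℤ × ℤ := ((cel δ v).1, (cel δ v).2 + 1)

/-- Index of the cell directly above cell `v` (when present). -/
def aIdx (v : ℕ) : ℕ := @List.idxOf _ instBEqOfDecidableEq (abv δ v) δ

lemma aIdx_lt {v : ℕ} (h : abv δ v ∈ δ) : aIdx δ v < δ.length := by
  rw [aIdx]; exact (@List.idxOf_lt_length_iff _ instBEqOfDecidableEq _ _ _).mpr h

lemma cel_aIdx {v : ℕ} (h : abv δ v ∈ δ) : cel δ (aIdx δ v) = abv δ v := by
  rw [cel, aIdx, List.getD_eq_getElem _ _ ((@List.idxOf_lt_length_iff _ instBEqOfDecidableEq _ _ _).mpr h)]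
  exact @List.getElem_idxOf _ instBEqOfDecidableEq _ _ _ _

lemma memA {x : ℕ × ℕ} (hx : x ∈ Finset.range δ.length ×ˢ Finset.range δ.length) :
    x.1 < δ.length ∧ x.2 < δ.length := by
  simpa [Finset.mem_product] using hx

lemma vals_ne {w : List ℕ} (hw : w.Nodup) {s t : ℕ} (hst : s ≠ t)
    (hs : s < w.length) (ht : t < w.length) : w.getD s 0 ≠ w.getD t 0 := by
  intro h
  rw [List.getD_eq_getElem _ _ hs, List.getD_eq_getElem _ _ ht] at h
  exact hst (hw.getElem_inj_iff.mp h)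

section Decomp
variable (hδ : IsDiagramList δ)
include hδ

lemma trip_iff (w : List ℕ) {j k : ℕ} (hj : j < δ.length) (hk : k < δ.length) :
    InvTripleAt δ w j k ↔ TCcfg δ j k ∧
      ((w.getD (mIdx δ j) 0 < w.getD k 0 ∧ w.getD k 0 < w.getD j 0) ∨
       (w.getD j 0 ≤ w.getD (mIdx δ j) 0 ∧ w.getD (mIdx δ j) 0 < w.getD k 0) ∨
       (w.getD k 0 < w.getD j 0 ∧ w.getD j 0 ≤ w.getD (mIdx δ j) 0)) := by
  constructor
  · rintro ⟨h1, h2, h3, m, hm, hcel, hor⟩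
    have hbel : cel δ m = bel δ j := hcel
    have hmem : bel δ j ∈ δ := hbel ▸ cel_mem (δ := δ) hm
    have hmi : m = mIdx δ j := mIdx_unique δ hδ hm hbel
    exact ⟨⟨h1, h2, h3, hmem⟩, hmi ▸ hor⟩
  · rintro ⟨⟨h1, h2, h3, hmem⟩, hor⟩
    exact ⟨h1, h2, h3, mIdx δ j, mIdx_lt (δ := δ) hmem, cel_mIdx (δ := δ) hmem, hor⟩

lemma cardT_plus (w : List ℕ) (hw : w.Nodup) (hlen : w.length = δ.length) :
    ((Finset.range δ.length ×ˢ Finset.range δ.length).filter fun x =>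
        InvTripleAt δ w x.1 x.2).card + TCcard δ
      = ∑ x ∈ Finset.range δ.length ×ˢ Finset.range δ.length,
          if TCcfg δ x.1 x.2 then
            ind w x.1 x.2 + ind w x.2 (mIdx δ x.1) + ind w (mIdx δ x.1) x.1
          else 0 := by
  rw [Finset.card_filter, TCcard, Finset.card_filter, ← Finset.sum_add_distrib]
  refine Finset.sum_congr rfl fun x hx => ?_
  obtain ⟨hx1, hx2⟩ := memA δ hx
  rw [trip_iff δ hδ w hx1 hx2]
  by_cases hTC : TCcfg δ x.1 x.2
  · have hlt := hTC.1
    have hrow := hTC.2.2.1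
    have hmem := hTC.2.2.2
    have hm := mIdx_lt (δ := δ) hmem
    have hcm := cel_mIdx (δ := δ) hmem
    have hne1 : x.1 ≠ x.2 := hlt.ne
    have hne2 : mIdx δ x.1 ≠ x.1 := by
      intro h
      rw [h] at hcm
      have := congrArg Prod.snd hcm
      simp only [bel] at this
      omega
    have hne3 : mIdx δ x.1 ≠ x.2 := by
      intro h
      rw [h] at hcm
      have := congrArg Prod.snd hcm
      simp only [bel] at this
      omega
    have hw1 : x.1 < w.length := by omega
    have hw2 : x.2 < w.length := by omega
    have hwm : mIdx δ x.1 < w.length := by omega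
    have d1 := vals_ne hw hne1 hw1 hw2
    have d2 := vals_ne hw hne2 hwm hw1
    have d3 := vals_ne hw hne3 hwm hw2
    set a := w.getD x.1 0 with ha
    set b := w.getD x.2 0 with hb
    set c := w.getD (mIdx δ x.1) 0 with hc
    simp only [ind, if_pos hTC]
    by_cases hOr : ((c < b ∧ b < a) ∨ (a ≤ c ∧ c < b) ∨ (b < a ∧ a ≤ c))
    · rw [if_pos ⟨hTC, hOr⟩]
      split_ifs <;> omega
    · rw [if_neg fun h => hOr h.2]
      split_ifs <;> omega
  · simp [hTC]

lemma cardP1_eq (w : List ℕ) :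
    ((Finset.range δ.length ×ˢ Finset.range δ.length).filter fun x =>
        InvPairBelowAt δ w x.1 x.2).card
      = ∑ x ∈ Finset.range δ.length ×ˢ Finset.range δ.length,
          if P1cfg δ x.1 x.2 then ind w x.1 x.2 else 0 := by
  rw [Finset.card_filter]
  refine Finset.sum_congr rfl fun x hx => ?_
  by_cases hc : P1cfg δ x.1 x.2
  · rw [if_pos hc]
    by_cases hd : w.getD x.2 0 < w.getD x.1 0
    · rw [if_pos (show InvPairBelowAt δ w x.1 x.2 from ⟨hc.1, hc.2.1, hc.2.2.1, hc.2.2.2, hd⟩),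
        ind, if_pos hd]
    · rw [if_neg (show ¬ InvPairBelowAt δ w x.1 x.2 from fun h => hd h.2.2.2.2), ind, if_neg hd]
  · rw [if_neg hc, if_neg (show ¬ InvPairBelowAt δ w x.1 x.2 from
      fun h => hc ⟨h.1, h.2.1, h.2.2.1, h.2.2.2.1⟩)]

lemma cardP2_eq (w : List ℕ) :
    ((Finset.range δ.length ×ˢ Finset.range δ.length).filter fun x =>
        InvPairAboveAt δ w x.1 x.2).card
      = ∑ x ∈ Finset.range δ.length ×ˢ Finset.range δ.length,
          if diag δ x.1 x.2 ∧ abv δ x.2 ∉ δ then ind w x.1 x.2 else 0 := by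
  rw [Finset.card_filter]
  refine Finset.sum_congr rfl fun x hx => ?_
  obtain ⟨hx1, hx2⟩ := memA δ hx
  by_cases hc : diag δ x.1 x.2 ∧ abv δ x.2 ∉ δ
  · rw [if_pos hc]
    by_cases hd : w.getD x.2 0 < w.getD x.1 0
    · rw [if_pos (show InvPairAboveAt δ w x.1 x.2 from ⟨hx1, hx2, hc.1.1, hc.1.2, hc.2, hd⟩),
        ind, if_pos hd]
    · rw [if_neg (show ¬ InvPairAboveAt δ w x.1 x.2 from fun h => hd h.2.2.2.2.2), ind, if_neg hd]
  · rw [if_neg hc, if_neg (show ¬ InvPairAboveAt δ w x.1 x.2 from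
      fun h => hc ⟨⟨h.2.2.1, h.2.2.2.1⟩, h.2.2.2.2.1⟩)]

lemma part1 (w : List ℕ) :
    (∑ x ∈ Finset.range δ.length ×ˢ Finset.range δ.length,
        if TCcfg δ x.1 x.2 then ind w x.1 x.2 else 0) +
    (∑ x ∈ Finset.range δ.length ×ˢ Finset.range δ.length,
        if P1cfg δ x.1 x.2 then ind w x.1 x.2 else 0)
      = ∑ x ∈ Finset.range δ.length ×ˢ Finset.range δ.length,
          (if (cel δ x.1).2 = (cel δ x.2).2 ∧ (cel δ x.1).1 < (cel δ x.2).1 then 1 else 0) *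
            ind w x.1 x.2 := by
  rw [← Finset.sum_add_distrib]
  refine Finset.sum_congr rfl fun x hx => ?_
  obtain ⟨hx1, hx2⟩ := memA δ hx
  by_cases hrow : (cel δ x.1).2 = (cel δ x.2).2
  · by_cases hlt : x.1 < x.2
    · have hxlt : (cel δ x.1).1 < (cel δ x.2).1 := by
        have := cel_ro δ hδ hlt hx2
        unfold ReadingOrder at this; omega
      by_cases hbel : bel δ x.1 ∈ δ
      · rw [if_pos (show TCcfg δ x.1 x.2 from ⟨hlt, hx2, hrow, hbel⟩),
          if_neg (show ¬ P1cfg δ x.1 x.2 from fun h => h.2.2.2 hbel),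
          if_pos (show _ ∧ _ from ⟨hrow, hxlt⟩), one_mul, add_zero]
      · rw [if_neg (show ¬ TCcfg δ x.1 x.2 from fun h => hbel h.2.2.2),
          if_pos (show P1cfg δ x.1 x.2 from ⟨hlt, hx2, hrow, hbel⟩),
          if_pos (show _ ∧ _ from ⟨hrow, hxlt⟩), one_mul, zero_add]
    · have hxge : ¬ (cel δ x.1).1 < (cel δ x.2).1 := by
        intro hc
        exact hlt (lt_of_ro δ hδ hx1 hx2 (Or.inr ⟨hrow, hc⟩))
      rw [if_neg (show ¬ TCcfg δ x.1 x.2 from fun h => hlt h.1),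
        if_neg (show ¬ P1cfg δ x.1 x.2 from fun h => hlt h.1),
        if_neg (show ¬ (_ ∧ _) from fun h => hxge h.2), zero_mul, add_zero]
  · rw [if_neg (show ¬ TCcfg δ x.1 x.2 from fun h => hrow h.2.2.1),
      if_neg (show ¬ P1cfg δ x.1 x.2 from fun h => hrow h.2.2.1),
      if_neg (show ¬ (_ ∧ _) from fun h => hrow h.1), zero_mul, add_zero]

lemma part2 (w : List ℕ) :
    (∑ x ∈ Finset.range δ.length ×ˢ Finset.range δ.length,
        if TCcfg δ x.1 x.2 then ind w x.2 (mIdx δ x.1) else 0)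
      = ∑ x ∈ Finset.range δ.length ×ˢ Finset.range δ.length,
          if diag δ x.1 x.2 ∧ abv δ x.2 ∈ δ then ind w x.1 x.2 else 0 := by
  rw [← Finset.sum_filter, ← Finset.sum_filter]
  refine Finset.sum_nbij' (i := fun x => (x.2, mIdx δ x.1)) (j := fun y => (aIdx δ y.2, y.1))
    ?_ ?_ ?_ ?_ ?_
  · rintro ⟨j, k⟩ hx
    rw [Finset.mem_filter] at hx
    obtain ⟨hA, hT⟩ := hx
    obtain ⟨hj, hk⟩ := memA δ hA
    dsimp only at hT hj hk ⊢
    obtain ⟨hlt, -, hrow, hbel⟩ := hT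
    have hm := mIdx_lt (δ := δ) hbel
    have hcm := cel_mIdx (δ := δ) hbel
    have h1 := congrArg Prod.fst hcm
    have h2 := congrArg Prod.snd hcm
    simp only [bel] at h1 h2
    have hxlt : (cel δ j).1 < (cel δ k).1 := by
      have := cel_ro δ hδ hlt hk
      unfold ReadingOrder at this; omega
    rw [Finset.mem_filter, Finset.mem_product]
    refine ⟨⟨Finset.mem_range.mpr hk, Finset.mem_range.mpr hm⟩,
      show diag δ k (mIdx δ j) from ⟨by omega, by omega⟩, ?_⟩
    show abv δ (mIdx δ j) ∈ δ
    have : abv δ (mIdx δ j) = cel δ j := by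
      rw [abv]; exact Prod.ext (by omega) (by omega)
    rw [this]
    exact cel_mem (δ := δ) hj
  · rintro ⟨u, v⟩ hy
    rw [Finset.mem_filter] at hy
    obtain ⟨hA, hD, habv⟩ := hy
    obtain ⟨hu, hv⟩ := memA δ hA
    dsimp only at hD habv hu hv ⊢
    obtain ⟨hd1, hd2⟩ := hD
    have hai := aIdx_lt (δ := δ) habv
    have hca := cel_aIdx (δ := δ) habv
    have h1 := congrArg Prod.fst hca
    have h2 := congrArg Prod.snd hca
    simp only [abv] at h1 h2
    have hbel : bel δ (aIdx δ v) = cel δ v := by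
      rw [bel]; exact Prod.ext (by omega) (by omega)
    have hja : aIdx δ v < u :=
      lt_of_ro δ hδ hai hu (Or.inr ⟨by omega, by omega⟩)
    rw [Finset.mem_filter, Finset.mem_product]
    exact ⟨⟨Finset.mem_range.mpr hai, Finset.mem_range.mpr hu⟩,
      show TCcfg δ (aIdx δ v) u from ⟨hja, hu, by omega, hbel ▸ cel_mem (δ := δ) hv⟩⟩
  · rintro ⟨j, k⟩ hx
    rw [Finset.mem_filter] at hx
    obtain ⟨hA, hT⟩ := hx
    obtain ⟨hj, hk⟩ := memA δ hA
    dsimp only at hT hj hk ⊢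
    have hbel := hT.2.2.2
    have hcm := cel_mIdx (δ := δ) hbel
    have h1 := congrArg Prod.fst hcm
    have h2 := congrArg Prod.snd hcm
    simp only [bel] at h1 h2
    have habv : abv δ (mIdx δ j) = cel δ j := by
      rw [abv]; exact Prod.ext (by omega) (by omega)
    have : aIdx δ (mIdx δ j) = j := by
      rw [aIdx, habv]
      exact indexOf_cel δ hδ hj
    simp [this]
  · rintro ⟨u, v⟩ hy
    rw [Finset.mem_filter] at hy
    obtain ⟨hA, hD, habv⟩ := hy
    obtain ⟨hu, hv⟩ := memA δ hA
    dsimp only at hD habv hu hv ⊢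
    have hca := cel_aIdx (δ := δ) habv
    have h1 := congrArg Prod.fst hca
    have h2 := congrArg Prod.snd hca
    simp only [abv] at h1 h2
    have hbel : cel δ v = bel δ (aIdx δ v) := by
      rw [bel]; exact (Prod.ext (by omega) (by omega)).symm
    have : mIdx δ (aIdx δ v) = v := (mIdx_unique δ hδ hv hbel).symm
    simp [this]
  · rintro ⟨j, k⟩ hx
    rfl

lemma part3 (w : List ℕ) :
    (∑ x ∈ Finset.range δ.length ×ˢ Finset.range δ.length,
        if TCcfg δ x.1 x.2 then ind w (mIdx δ x.1) x.1 else 0)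
      = ∑ x ∈ Finset.range δ.length ×ˢ Finset.range δ.length,
          (if cel δ x.1 = bel δ x.2 then Rr δ x.2 else 0) * ind w x.1 x.2 := by
  rw [Finset.sum_product, Finset.sum_product_right]
  refine Finset.sum_congr rfl fun j hj => ?_
  have hjn := Finset.mem_range.mp hj
  by_cases hbel : bel δ j ∈ δ
  · have hL : (∑ k ∈ Finset.range δ.length, if TCcfg δ j k then ind w (mIdx δ j) j else 0)
        = Rr δ j * ind w (mIdx δ j) j := by
      rw [← Finset.sum_filter, Finset.sum_const, smul_eq_mul]
      congr 1
      rw [Rr]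
      refine congrArg Finset.card (Finset.filter_congr fun k hk => ?_)
      have hkn := Finset.mem_range.mp hk
      unfold TCcfg
      constructor
      · rintro ⟨a, b, c, d⟩; exact ⟨a, c.symm⟩
      · rintro ⟨a, b⟩; exact ⟨a, hkn, b.symm, hbel⟩
    have hR : (∑ u ∈ Finset.range δ.length,
          (if cel δ u = bel δ j then Rr δ j else 0) * ind w u j)
        = Rr δ j * ind w (mIdx δ j) j := by
      rw [Finset.sum_eq_single_of_mem (mIdx δ j)
        (Finset.mem_range.mpr (mIdx_lt (δ := δ) hbel))]
      · rw [if_pos (cel_mIdx (δ := δ) hbel)]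
      · intro u hu hne
        rw [if_neg, zero_mul]
        intro hc
        exact hne (mIdx_unique δ hδ (Finset.mem_range.mp hu) hc)
    rw [hL, hR]
  · rw [Finset.sum_eq_zero, Finset.sum_eq_zero]
    · intro u hu
      rw [if_neg, zero_mul]
      intro hc
      exact hbel (hc ▸ cel_mem (δ := δ) (Finset.mem_range.mp hu))
    · intro k hk
      rw [if_neg (fun h => hbel h.2.2.2)]

theorem decomp (w : List ℕ) (hw : w.Nodup) (hlen : w.length = δ.length) :
    invD δ w + TCcard δ = Gs δ w := by
  have e1 := cardT_plus δ hδ w hw hlen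
  have e2 := cardP1_eq δ hδ w
  have e3 := cardP2_eq δ hδ w
  have e4 := part1 δ hδ w
  have e5 := part2 δ hδ w
  have e6 := part3 δ hδ w
  have esplit : (∑ x ∈ Finset.range δ.length ×ˢ Finset.range δ.length,
        if TCcfg δ x.1 x.2 then
          ind w x.1 x.2 + ind w x.2 (mIdx δ x.1) + ind w (mIdx δ x.1) x.1
        else 0)
      = (∑ x ∈ Finset.range δ.length ×ˢ Finset.range δ.length,
          if TCcfg δ x.1 x.2 then ind w x.1 x.2 else 0)
        + (∑ x ∈ Finset.range δ.length ×ˢ Finset.range δ.length,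
            if TCcfg δ x.1 x.2 then ind w x.2 (mIdx δ x.1) else 0)
        + (∑ x ∈ Finset.range δ.length ×ˢ Finset.range δ.length,
            if TCcfg δ x.1 x.2 then ind w (mIdx δ x.1) x.1 else 0) := by
    rw [← Finset.sum_add_distrib, ← Finset.sum_add_distrib]
    refine Finset.sum_congr rfl fun x hx => ?_
    split_ifs <;> simp
  have emerge : (∑ x ∈ Finset.range δ.length ×ˢ Finset.range δ.length,
        if diag δ x.1 x.2 ∧ abv δ x.2 ∈ δ then ind w x.1 x.2 else 0)
      + (∑ x ∈ Finset.range δ.length ×ˢ Finset.range δ.length,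
          if diag δ x.1 x.2 ∧ abv δ x.2 ∉ δ then ind w x.1 x.2 else 0)
      = ∑ x ∈ Finset.range δ.length ×ˢ Finset.range δ.length,
          (if (cel δ x.1).2 = (cel δ x.2).2 + 1 ∧ (cel δ x.2).1 < (cel δ x.1).1 then 1 else 0)
            * ind w x.1 x.2 := by
    rw [← Finset.sum_add_distrib]
    refine Finset.sum_congr rfl fun x hx => ?_
    by_cases hd : diag δ x.1 x.2
    · have hd' := hd
      unfold diag at hd'
      rw [if_pos hd', one_mul]
      by_cases habv : abv δ x.2 ∈ δ
      · rw [if_pos ⟨hd, habv⟩, if_neg (fun h => h.2 habv), add_zero]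
      · rw [if_neg (fun h => habv h.2), if_pos ⟨hd, habv⟩, zero_add]
    · have hd' : ¬ ((cel δ x.1).2 = (cel δ x.2).2 + 1 ∧ (cel δ x.2).1 < (cel δ x.1).1) := hd
      rw [if_neg (fun h => hd h.1), if_neg (fun h => hd h.1), if_neg hd', zero_mul, add_zero]
  have eGs : Gs δ w = (∑ x ∈ Finset.range δ.length ×ˢ Finset.range δ.length,
        (if (cel δ x.1).2 = (cel δ x.2).2 ∧ (cel δ x.1).1 < (cel δ x.2).1 then 1 else 0)
          * ind w x.1 x.2)
      + (∑ x ∈ Finset.range δ.length ×ˢ Finset.range δ.length,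
          (if (cel δ x.1).2 = (cel δ x.2).2 + 1 ∧ (cel δ x.2).1 < (cel δ x.1).1 then 1 else 0)
            * ind w x.1 x.2)
      + (∑ x ∈ Finset.range δ.length ×ˢ Finset.range δ.length,
          (if cel δ x.1 = bel δ x.2 then Rr δ x.2 else 0) * ind w x.1 x.2) := by
    rw [Gs, ← Finset.sum_add_distrib, ← Finset.sum_add_distrib]
    refine Finset.sum_congr rfl fun x hx => ?_
    rw [Nc, add_mul, add_mul]
  show ((Finset.range δ.length ×ˢ Finset.range δ.length).filter fun p =>
      InvTripleAt δ w p.1 p.2).card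
    + ((Finset.range δ.length ×ˢ Finset.range δ.length).filter fun p =>
        InvPairBelowAt δ w p.1 p.2).card
    + ((Finset.range δ.length ×ˢ Finset.range δ.length).filter fun p =>
        InvPairAboveAt δ w p.1 p.2).card
    + TCcard δ = Gs δ w
  omega

end Decomp

lemma leRO_iff (c d : ℤ × ℤ) : leRO c d ↔ (d.2 < c.2 ∨ (c.2 = d.2 ∧ c.1 ≤ d.1)) := by
  simp only [leRO, ReadingOrder, Prod.ext_iff]
  omega

lemma inPistol_iff (c e : ℤ × ℤ) :
    InPistol c e ↔ ((e.2 = c.2 ∧ c.1 ≤ e.1) ∨ (e.2 = c.2 - 1 ∧ e.1 ≤ c.1)) := by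
  unfold InPistol
  rw [leRO_iff, leRO_iff]
  dsimp only
  omega

lemma inPistol_self (c : ℤ × ℤ) : InPistol c c := by
  rw [inPistol_iff]; omega

section Geom
variable (hδ : IsDiagramList δ)
include hδ

lemma pistol_interval {c : ℤ × ℤ} {u s v : ℕ} (hu : u ≤ s) (hs : s ≤ v) (hv : v < δ.length)
    (h1 : InPistol c (cel δ u)) (h2 : InPistol c (cel δ v)) : InPistol c (cel δ s) := by
  rcases eq_or_lt_of_le hu with rfl | hus
  · exact h1
  rcases eq_or_lt_of_le hs with rfl | hsv
  · exact h2
  have r1 := cel_ro δ hδ hus (lt_of_le_of_lt hs hv)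
  have r2 := cel_ro δ hδ hsv hv
  rw [inPistol_iff] at h1 h2 ⊢
  unfold ReadingOrder at r1 r2
  omega

lemma mk_pistoled {u v : ℕ} (hv : v < δ.length) (huv : u ≤ v)
    (hIP : InPistol (cel δ u) (cel δ v)) (S : List ℕ) (hS : ∀ s ∈ S, u ≤ s ∧ s ≤ v) :
    Pistoled δ S := by
  refine ⟨cel δ u, cel_mem (δ := δ) (by omega), fun s hs => ?_⟩
  obtain ⟨h1, h2⟩ := hS s hs
  have hsn : s < δ.length := by omega
  exact ⟨hsn, pistol_interval δ hδ h1 h2 hv (inPistol_self _) hIP⟩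

lemma Nc_outer {u v : ℕ} (huv : u < v) (hv : v < δ.length) {S : List ℕ}
    (hS : ∀ s ∈ S, u ≤ s ∧ s ≤ v) (hnp : ¬ Pistoled δ S) :
    Nc δ u v = 0 ∧ Nc δ v u = 0 := by
  have key : ¬ InPistol (cel δ u) (cel δ v) := fun hIP =>
    hnp (mk_pistoled δ hδ hv huv.le hIP S hS)
  have hro := cel_ro δ hδ huv hv
  unfold ReadingOrder at hro
  rw [inPistol_iff] at key
  constructor <;>
  · simp only [Nc, bel, Prod.ext_iff]
    split_ifs <;> omega

lemma Nc_pistol {a b t : ℕ} (hab : a < b) (hb : b < δ.length) (ht : t < δ.length)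
    (htout : t < a ∨ b < t) {c : ℤ × ℤ}
    (ha' : InPistol c (cel δ a)) (hb' : InPistol c (cel δ b)) (ht' : InPistol c (cel δ t)) :
    Nc δ a b = 1 ∧ Nc δ b a = 0 := by
  have hro := cel_ro δ hδ hab hb
  unfold ReadingOrder at hro
  have hvert : ¬ (cel δ b = bel δ a) := by
    intro hEq
    rw [inPistol_iff] at ha' hb' ht'
    have h1 := congrArg Prod.fst hEq
    have h2 := congrArg Prod.snd hEq
    simp only [bel] at h1 h2
    rcases htout with h | h
    · have hroT := cel_ro δ hδ h (by omega)
      unfold ReadingOrder at hroT; omega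
    · have hroT := cel_ro δ hδ h ht
      unfold ReadingOrder at hroT; omega
  rw [inPistol_iff] at ha' hb'
  constructor <;>
  · simp only [Nc, bel, Prod.ext_iff] at hvert ⊢
    split_ifs <;> omega

end Geom

lemma getD_map (w : List ℕ) (f : ℕ → ℕ) (s : ℕ) (hs : s < w.length) :
    (w.map f).getD s 0 = f (w.getD s 0) := by
  rw [List.getD_eq_getElem _ _ (by simpa), List.getD_eq_getElem _ _ hs, List.getElem_map]

lemma pos_unique {w : List ℕ} (hnd : w.Nodup) {s v : ℕ} (hs : s < w.length)
    (hv : w.getD s 0 = v) : s = w.idxOf v := by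
  have hm : v ∈ w := by
    rw [← hv, List.getD_eq_getElem _ _ hs]; exact List.getElem_mem _
  have h2 := List.idxOf_lt_length_iff.mpr hm
  have h3 : w.getD (w.idxOf v) 0 = v := by
    rw [List.getD_eq_getElem _ _ h2]; exact List.getElem_idxOf _
  rw [List.getD_eq_getElem _ _ hs] at hv
  rw [List.getD_eq_getElem _ _ h2] at h3
  exact hnd.getElem_inj_iff.mp (hv.trans h3.symm)

lemma getD_indexOf {w : List ℕ} {v : ℕ} (h : v ∈ w) : w.getD (w.idxOf v) 0 = v := by
  rw [List.getD_eq_getElem _ _ (List.idxOf_lt_length_iff.mpr h)]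
  exact List.getElem_idxOf _

lemma ind_self (w : List ℕ) (u : ℕ) : ind w u u = 0 := by
  rw [ind, if_neg (lt_irrefl _)]

lemma ind_map_eq {w : List ℕ} {f : ℕ → ℕ} {i u v : ℕ}
    (hu : u < w.length) (hv : v < w.length)
    (hfix : ∀ x, ¬(i - 1 ≤ x ∧ x ≤ i + 1) → f x = x)
    (hrange : ∀ x, i - 1 ≤ x ∧ x ≤ i + 1 → i - 1 ≤ f x ∧ f x ≤ i + 1)
    (hnb : ¬(i - 1 ≤ w.getD u 0 ∧ w.getD u 0 ≤ i + 1) ∨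
      ¬(i - 1 ≤ w.getD v 0 ∧ w.getD v 0 ≤ i + 1) ∨ u = v) :
    ind (w.map f) u v = ind w u v := by
  have hu' : (w.map f).getD u 0 = f (w.getD u 0) := getD_map w f u hu
  have hv' : (w.map f).getD v 0 = f (w.getD v 0) := getD_map w f v hv
  rcases hnb with h | h | rfl
  · rw [ind, ind, hu', hv', hfix _ h]
    by_cases hb : i - 1 ≤ w.getD v 0 ∧ w.getD v 0 ≤ i + 1
    · obtain ⟨h1, h2⟩ := hrange _ hb
      split_ifs <;> omega
    · rw [hfix _ hb]
  · rw [ind, ind, hu', hv', hfix _ h]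
    by_cases hb : i - 1 ≤ w.getD u 0 ∧ w.getD u 0 ≤ i + 1
    · obtain ⟨h1, h2⟩ := hrange _ hb
      split_ifs <;> omega
    · rw [hfix _ hb]
  · rw [ind_self, ind_self]

lemma sum3 {p q r : ℕ} (hpq : p ≠ q) (hpr : p ≠ r) (hqr : q ≠ r) (g : ℕ → ℕ) :
    ∑ s ∈ ({p, q, r} : Finset ℕ), g s = g p + g q + g r := by
  rw [show ({p, q, r} : Finset ℕ) = insert p (insert q {r}) from rfl,
    Finset.sum_insert (by simp [hpq, hpr]), Finset.sum_insert (by simp [hqr]),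
    Finset.sum_singleton, add_assoc]

lemma sum9 {p q r : ℕ} (hpq : p ≠ q) (hpr : p ≠ r) (hqr : q ≠ r) (F : ℕ → ℕ → ℕ) :
    ∑ x ∈ ({p, q, r} : Finset ℕ) ×ˢ ({p, q, r} : Finset ℕ), F x.1 x.2
      = (F p p + F p q + F p r) + (F q p + F q q + F q r) + (F r p + F r q + F r r) := by
  rw [Finset.sum_product]
  rw [sum3 hpq hpr hqr (fun s => ∑ y ∈ ({p, q, r} : Finset ℕ), F s y)]
  rw [sum3 hpq hpr hqr (F p), sum3 hpq hpr hqr (F q), sum3 hpq hpr hqr (F r)]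

lemma Gs_split (hδ : IsDiagramList δ) {p q r : ℕ} (hp : p < δ.length) (hq : q < δ.length)
    (hr : r < δ.length) (w w' : List ℕ)
    (hout : ∀ u v, u < δ.length → v < δ.length →
      ¬(u ∈ ({p, q, r} : Finset ℕ) ∧ v ∈ ({p, q, r} : Finset ℕ)) →
      ind w u v = ind w' u v)
    (hS : ∑ x ∈ ({p, q, r} : Finset ℕ) ×ˢ ({p, q, r} : Finset ℕ),
        Nc δ x.1 x.2 * ind w x.1 x.2
      = ∑ x ∈ ({p, q, r} : Finset ℕ) ×ˢ ({p, q, r} : Finset ℕ),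
          Nc δ x.1 x.2 * ind w' x.1 x.2) :
    Gs δ w = Gs δ w' := by
  classical
  have hsub : (({p, q, r} : Finset ℕ) ×ˢ ({p, q, r} : Finset ℕ))
      ⊆ Finset.range δ.length ×ˢ Finset.range δ.length := by
    refine Finset.product_subset_product ?_ ?_ <;>
    · intro s hs
      simp only [Finset.mem_insert, Finset.mem_singleton] at hs
      rw [Finset.mem_range]
      rcases hs with rfl | rfl | rfl <;> omega
  rw [Gs, Gs,
    ← Finset.sum_filter_add_sum_filter_not (Finset.range δ.length ×ˢ Finset.range δ.length)
      (fun x => x ∈ ({p, q, r} : Finset ℕ) ×ˢ ({p, q, r} : Finset ℕ)),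
    ← Finset.sum_filter_add_sum_filter_not (Finset.range δ.length ×ˢ Finset.range δ.length)
      (fun x => x ∈ ({p, q, r} : Finset ℕ) ×ˢ ({p, q, r} : Finset ℕ))]
  have hfe : (Finset.range δ.length ×ˢ Finset.range δ.length).filter
      (fun x => x ∈ ({p, q, r} : Finset ℕ) ×ˢ ({p, q, r} : Finset ℕ))
      = ({p, q, r} : Finset ℕ) ×ˢ ({p, q, r} : Finset ℕ) := by
    rw [Finset.filter_mem_eq_inter, Finset.inter_eq_right.mpr hsub]
  rw [hfe]
  have hrest : (∑ x ∈ (Finset.range δ.length ×ˢ Finset.range δ.length).filter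
        (fun x => x ∉ ({p, q, r} : Finset ℕ) ×ˢ ({p, q, r} : Finset ℕ)),
        Nc δ x.1 x.2 * ind w x.1 x.2)
      = ∑ x ∈ (Finset.range δ.length ×ˢ Finset.range δ.length).filter
          (fun x => x ∉ ({p, q, r} : Finset ℕ) ×ˢ ({p, q, r} : Finset ℕ)),
          Nc δ x.1 x.2 * ind w' x.1 x.2 := by
    refine Finset.sum_congr rfl fun x hx => ?_
    rw [Finset.mem_filter] at hx
    obtain ⟨hA, hnS⟩ := hx
    obtain ⟨hx1, hx2⟩ := memA δ hA
    rw [hout x.1 x.2 hx1 hx2 (by simpa [Finset.mem_product] using hnS)]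
  rw [hS, hrest]

lemma invD_eq_of (hδ : IsDiagramList δ) (w w' : List ℕ) (hw : w.Nodup) (hw' : w'.Nodup)
    (hl : w.length = δ.length) (hl' : w'.length = δ.length)
    (hGs : Gs δ w = Gs δ w') : invD δ w = invD δ w' := by
  have e1 := decomp δ hδ w hw hl
  have e2 := decomp δ hδ w' hw' hl'
  omega

lemma branch_main (hδ : IsDiagramList δ) (π : List ℕ) (hnd : π.Nodup)
    (hlen : π.length = δ.length) (i : ℕ) (hi : 1 < i) (f : ℕ → ℕ)
    (hfix : ∀ x, ¬(i - 1 ≤ x ∧ x ≤ i + 1) → f x = x)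
    (hrange : ∀ x, i - 1 ≤ x ∧ x ≤ i + 1 → i - 1 ≤ f x ∧ f x ≤ i + 1)
    (hinj : Function.Injective f)
    (hp : π.idxOf (i - 1) < δ.length) (hq : π.idxOf i < δ.length)
    (hr : π.idxOf (i + 1) < δ.length)
    (hS : ∑ x ∈ ({π.idxOf (i - 1), π.idxOf i, π.idxOf (i + 1)} : Finset ℕ) ×ˢ
        ({π.idxOf (i - 1), π.idxOf i, π.idxOf (i + 1)} : Finset ℕ),
        Nc δ x.1 x.2 * ind π x.1 x.2
      = ∑ x ∈ ({π.idxOf (i - 1), π.idxOf i, π.idxOf (i + 1)} : Finset ℕ) ×ˢ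
          ({π.idxOf (i - 1), π.idxOf i, π.idxOf (i + 1)} : Finset ℕ),
          Nc δ x.1 x.2 * ind (π.map f) x.1 x.2) :
    invD δ π = invD δ (π.map f) := by
  refine invD_eq_of δ hδ π (π.map f) hnd (hnd.map hinj) hlen (by simpa) ?_
  refine Gs_split δ hδ hp hq hr π (π.map f) ?_ hS
  intro u v hu hv hnot
  refine (ind_map_eq (i := i) (by omega) (by omega) hfix hrange ?_).symm
  by_cases hbu : i - 1 ≤ π.getD u 0 ∧ π.getD u 0 ≤ i + 1
  · by_cases hbv : i - 1 ≤ π.getD v 0 ∧ π.getD v 0 ≤ i + 1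
    · exfalso
      apply hnot
      constructor
      · have h3 : π.getD u 0 = i - 1 ∨ π.getD u 0 = i ∨ π.getD u 0 = i + 1 := by omega
        simp only [Finset.mem_insert, Finset.mem_singleton]
        rcases h3 with h | h | h
        · exact Or.inl (pos_unique hnd (by omega) h)
        · exact Or.inr (Or.inl (pos_unique hnd (by omega) h))
        · exact Or.inr (Or.inr (pos_unique hnd (by omega) h))
      · have h3 : π.getD v 0 = i - 1 ∨ π.getD v 0 = i ∨ π.getD v 0 = i + 1 := by omega
        simp only [Finset.mem_insert, Finset.mem_singleton]
        rcases h3 with h | h | h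
        · exact Or.inl (pos_unique hnd (by omega) h)
        · exact Or.inr (Or.inl (pos_unique hnd (by omega) h))
        · exact Or.inr (Or.inr (pos_unique hnd (by omega) h))
    · exact Or.inr (Or.inl hbv)
  · exact Or.inl hbu

end InvPrf

set_option maxHeartbeats 4000000 in
theorem Ddelta_preserves_inv (δ : List (ℤ × ℤ)) (hδ : IsDiagramList δ) (i : ℕ)
    (π π' : List ℕ) (hπ : π.Perm (List.range' 1 δ.length))
    (h1 : 1 < i) (h2 : i < δ.length) (hπ' : π' = Ddelta δ i π) :
    invD δ π = invD δ π' := by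
  classical
  have hlen : π.length = δ.length := by simpa using hπ.length_eq
  have hnd : π.Nodup := hπ.nodup_iff.mpr List.nodup_range'
  have hmemiff : ∀ x, x ∈ π ↔ 1 ≤ x ∧ x < 1 + δ.length := fun x => by
    rw [hπ.mem_iff, List.mem_range'_1]
  have hm1 : (i - 1) ∈ π := (hmemiff _).mpr ⟨by omega, by omega⟩
  have hm2 : i ∈ π := (hmemiff _).mpr ⟨by omega, by omega⟩
  have hm3 : (i + 1) ∈ π := (hmemiff _).mpr ⟨by omega, by omega⟩
  have hp : π.idxOf (i - 1) < δ.length := hlen ▸ List.idxOf_lt_length_iff.mpr hm1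
  have hq : π.idxOf i < δ.length := hlen ▸ List.idxOf_lt_length_iff.mpr hm2
  have hr : π.idxOf (i + 1) < δ.length := hlen ▸ List.idxOf_lt_length_iff.mpr hm3
  have hvp : π.getD (π.idxOf (i - 1)) 0 = i - 1 := InvPrf.getD_indexOf hm1
  have hvq : π.getD (π.idxOf i) 0 = i := InvPrf.getD_indexOf hm2
  have hvr : π.getD (π.idxOf (i + 1)) 0 = i + 1 := InvPrf.getD_indexOf hm3
  have hpq : π.idxOf (i - 1) ≠ π.idxOf i := fun h => by rw [h, hvq] at hvp; omega
  have hpr : π.idxOf (i - 1) ≠ π.idxOf (i + 1) := fun h => by rw [h, hvr] at hvp; omega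
  have hqr : π.idxOf i ≠ π.idxOf (i + 1) := fun h => by rw [h, hvr] at hvq; omega
  have e_pq : InvPrf.ind π (π.idxOf (i - 1)) (π.idxOf i) = 0 := by
    rw [InvPrf.ind, hvq, hvp, if_neg (by omega)]
  have e_qp : InvPrf.ind π (π.idxOf i) (π.idxOf (i - 1)) = 1 := by
    rw [InvPrf.ind, hvp, hvq, if_pos (by omega)]
  have e_pr : InvPrf.ind π (π.idxOf (i - 1)) (π.idxOf (i + 1)) = 0 := by
    rw [InvPrf.ind, hvr, hvp, if_neg (by omega)]
  have e_rp : InvPrf.ind π (π.idxOf (i + 1)) (π.idxOf (i - 1)) = 1 := by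
    rw [InvPrf.ind, hvp, hvr, if_pos (by omega)]
  have e_qr : InvPrf.ind π (π.idxOf i) (π.idxOf (i + 1)) = 0 := by
    rw [InvPrf.ind, hvr, hvq, if_neg (by omega)]
  have e_rq : InvPrf.ind π (π.idxOf (i + 1)) (π.idxOf i) = 1 := by
    rw [InvPrf.ind, hvq, hvr, if_pos (by omega)]
  subst hπ'
  simp only [Ddelta, dtil, delem]
  split_ifs with hPist hA hB hC hC' hA' hB'
  · rfl
  · rw [cycVals]
    refine InvPrf.branch_main δ hδ π hnd hlen i h1 _ ?_ ?_ ?_ hp hq hr ?_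
    · intro x hx
      beta_reduce
      split_ifs <;> omega
    · intro x hx
      beta_reduce
      constructor <;> split_ifs <;> omega
    · intro x y hxy
      simp only [] at hxy
      split_ifs at hxy <;> omega
    · obtain ⟨c, hcmem, hall⟩ := hPist
      have HPp := (hall (π.idxOf (i - 1)) (by simp)).2
      have HPq := (hall (π.idxOf i) (by simp)).2
      have HPr := (hall (π.idxOf (i + 1)) (by simp)).2
      obtain ⟨n1, n2⟩ := InvPrf.Nc_pistol δ hδ hB.1 hp hr (Or.inr hC) HPq HPp HPr
      obtain ⟨n3, n4⟩ := InvPrf.Nc_pistol δ hδ hC hr hq (Or.inl hB.1) HPp HPr HPq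
      have mvp : (π.map (fun x => if x = i then i - 1 else if x = i - 1 then i + 1 else if x = i + 1 then i else x)).getD (π.idxOf (i - 1)) 0 = i + 1 := by
        rw [InvPrf.getD_map _ _ _ (by omega), hvp]
        beta_reduce
        split_ifs <;> omega
      have mvq : (π.map (fun x => if x = i then i - 1 else if x = i - 1 then i + 1 else if x = i + 1 then i else x)).getD (π.idxOf i) 0 = i - 1 := by
        rw [InvPrf.getD_map _ _ _ (by omega), hvq]
        beta_reduce
        split_ifs <;> omega
      have mvr : (π.map (fun x => if x = i then i - 1 else if x = i - 1 then i + 1 else if x = i + 1 then i else x)).getD (π.idxOf (i + 1)) 0 = i := by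
        rw [InvPrf.getD_map _ _ _ (by omega), hvr]
        beta_reduce
        split_ifs <;> omega
      have m_pq : InvPrf.ind (π.map (fun x => if x = i then i - 1 else if x = i - 1 then i + 1 else if x = i + 1 then i else x)) (π.idxOf (i - 1)) (π.idxOf i) = 1 := by
        rw [InvPrf.ind, mvq, mvp, if_pos (by omega)]
      have m_qp : InvPrf.ind (π.map (fun x => if x = i then i - 1 else if x = i - 1 then i + 1 else if x = i + 1 then i else x)) (π.idxOf i) (π.idxOf (i - 1)) = 0 := by
        rw [InvPrf.ind, mvp, mvq, if_neg (by omega)]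
      have m_pr : InvPrf.ind (π.map (fun x => if x = i then i - 1 else if x = i - 1 then i + 1 else if x = i + 1 then i else x)) (π.idxOf (i - 1)) (π.idxOf (i + 1)) = 1 := by
        rw [InvPrf.ind, mvr, mvp, if_pos (by omega)]
      have m_rp : InvPrf.ind (π.map (fun x => if x = i then i - 1 else if x = i - 1 then i + 1 else if x = i + 1 then i else x)) (π.idxOf (i + 1)) (π.idxOf (i - 1)) = 0 := by
        rw [InvPrf.ind, mvp, mvr, if_neg (by omega)]
      have m_qr : InvPrf.ind (π.map (fun x => if x = i then i - 1 else if x = i - 1 then i + 1 else if x = i + 1 then i else x)) (π.idxOf i) (π.idxOf (i + 1)) = 0 := by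
        rw [InvPrf.ind, mvr, mvq, if_neg (by omega)]
      have m_rq : InvPrf.ind (π.map (fun x => if x = i then i - 1 else if x = i - 1 then i + 1 else if x = i + 1 then i else x)) (π.idxOf (i + 1)) (π.idxOf i) = 1 := by
        rw [InvPrf.ind, mvq, mvr, if_pos (by omega)]
      rw [InvPrf.sum9 hpq hpr hqr (fun u v => InvPrf.Nc δ u v * InvPrf.ind π u v),
        InvPrf.sum9 hpq hpr hqr (fun u v => InvPrf.Nc δ u v * InvPrf.ind (π.map (fun x => if x = i then i - 1 else if x = i - 1 then i + 1 else if x = i + 1 then i else x)) u v)]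
      simp only [e_pq, e_qp, e_pr, e_rp, e_qr, e_rq, m_pq, m_qp, m_pr, m_rp, m_qr, m_rq,
        InvPrf.ind_self, mul_zero, mul_one, add_zero, zero_add]
      omega
  · rw [cycVals]
    refine InvPrf.branch_main δ hδ π hnd hlen i h1 _ ?_ ?_ ?_ hp hq hr ?_
    · intro x hx
      beta_reduce
      split_ifs <;> omega
    · intro x hx
      beta_reduce
      constructor <;> split_ifs <;> omega
    · intro x y hxy
      simp only [] at hxy
      split_ifs at hxy <;> omega
    · obtain ⟨c, hcmem, hall⟩ := hPist
      have HPp := (hall (π.idxOf (i - 1)) (by simp)).2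
      have HPq := (hall (π.idxOf i) (by simp)).2
      have HPr := (hall (π.idxOf (i + 1)) (by simp)).2
      have hRP : π.idxOf (i + 1) < π.idxOf (i - 1) := by omega
      obtain ⟨n1, n2⟩ := InvPrf.Nc_pistol δ hδ hB.2 hr hp (Or.inr hRP) HPq HPr HPp
      obtain ⟨n3, n4⟩ := InvPrf.Nc_pistol δ hδ hRP hp hq (Or.inl hB.2) HPr HPp HPq
      have mvp : (π.map (fun x => if x = i then i + 1 else if x = i + 1 then i - 1 else if x = i - 1 then i else x)).getD (π.idxOf (i - 1)) 0 = i := by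
        rw [InvPrf.getD_map _ _ _ (by omega), hvp]
        beta_reduce
        split_ifs <;> omega
      have mvq : (π.map (fun x => if x = i then i + 1 else if x = i + 1 then i - 1 else if x = i - 1 then i else x)).getD (π.idxOf i) 0 = i + 1 := by
        rw [InvPrf.getD_map _ _ _ (by omega), hvq]
        beta_reduce
        split_ifs <;> omega
      have mvr : (π.map (fun x => if x = i then i + 1 else if x = i + 1 then i - 1 else if x = i - 1 then i else x)).getD (π.idxOf (i + 1)) 0 = i - 1 := by
        rw [InvPrf.getD_map _ _ _ (by omega), hvr]
        beta_reduce
        split_ifs <;> omega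
      have m_pq : InvPrf.ind (π.map (fun x => if x = i then i + 1 else if x = i + 1 then i - 1 else if x = i - 1 then i else x)) (π.idxOf (i - 1)) (π.idxOf i) = 0 := by
        rw [InvPrf.ind, mvq, mvp, if_neg (by omega)]
      have m_qp : InvPrf.ind (π.map (fun x => if x = i then i + 1 else if x = i + 1 then i - 1 else if x = i - 1 then i else x)) (π.idxOf i) (π.idxOf (i - 1)) = 1 := by
        rw [InvPrf.ind, mvp, mvq, if_pos (by omega)]
      have m_pr : InvPrf.ind (π.map (fun x => if x = i then i + 1 else if x = i + 1 then i - 1 else if x = i - 1 then i else x)) (π.idxOf (i - 1)) (π.idxOf (i + 1)) = 1 := by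
        rw [InvPrf.ind, mvr, mvp, if_pos (by omega)]
      have m_rp : InvPrf.ind (π.map (fun x => if x = i then i + 1 else if x = i + 1 then i - 1 else if x = i - 1 then i else x)) (π.idxOf (i + 1)) (π.idxOf (i - 1)) = 0 := by
        rw [InvPrf.ind, mvp, mvr, if_neg (by omega)]
      have m_qr : InvPrf.ind (π.map (fun x => if x = i then i + 1 else if x = i + 1 then i - 1 else if x = i - 1 then i else x)) (π.idxOf i) (π.idxOf (i + 1)) = 1 := by
        rw [InvPrf.ind, mvr, mvq, if_pos (by omega)]
      have m_rq : InvPrf.ind (π.map (fun x => if x = i then i + 1 else if x = i + 1 then i - 1 else if x = i - 1 then i else x)) (π.idxOf (i + 1)) (π.idxOf i) = 0 := by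
        rw [InvPrf.ind, mvq, mvr, if_neg (by omega)]
      rw [InvPrf.sum9 hpq hpr hqr (fun u v => InvPrf.Nc δ u v * InvPrf.ind π u v),
        InvPrf.sum9 hpq hpr hqr (fun u v => InvPrf.Nc δ u v * InvPrf.ind (π.map (fun x => if x = i then i + 1 else if x = i + 1 then i - 1 else if x = i - 1 then i else x)) u v)]
      simp only [e_pq, e_qp, e_pr, e_rp, e_qr, e_rq, m_pq, m_qp, m_pr, m_rp, m_qr, m_rq,
        InvPrf.ind_self, mul_zero, mul_one, add_zero, zero_add]
      omega
  · rw [cycVals]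
    refine InvPrf.branch_main δ hδ π hnd hlen i h1 _ ?_ ?_ ?_ hp hq hr ?_
    · intro x hx
      beta_reduce
      split_ifs <;> omega
    · intro x hx
      beta_reduce
      constructor <;> split_ifs <;> omega
    · intro x y hxy
      simp only [] at hxy
      split_ifs at hxy <;> omega
    · obtain ⟨c, hcmem, hall⟩ := hPist
      have HPp := (hall (π.idxOf (i - 1)) (by simp)).2
      have HPq := (hall (π.idxOf i) (by simp)).2
      have HPr := (hall (π.idxOf (i + 1)) (by simp)).2
      have hPQ : π.idxOf (i - 1) < π.idxOf i := by omega
      have hRQ : π.idxOf (i + 1) < π.idxOf i := by omega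
      obtain ⟨n1, n2⟩ := InvPrf.Nc_pistol δ hδ hC' hr hq (Or.inr hRQ) HPp HPr HPq
      obtain ⟨n3, n4⟩ := InvPrf.Nc_pistol δ hδ hRQ hq hp (Or.inl hC') HPr HPq HPp
      have mvp : (π.map (fun x => if x = i - 1 then i else if x = i then i + 1 else if x = i + 1 then i - 1 else x)).getD (π.idxOf (i - 1)) 0 = i := by
        rw [InvPrf.getD_map _ _ _ (by omega), hvp]
        beta_reduce
        split_ifs <;> omega
      have mvq : (π.map (fun x => if x = i - 1 then i else if x = i then i + 1 else if x = i + 1 then i - 1 else x)).getD (π.idxOf i) 0 = i + 1 := by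
        rw [InvPrf.getD_map _ _ _ (by omega), hvq]
        beta_reduce
        split_ifs <;> omega
      have mvr : (π.map (fun x => if x = i - 1 then i else if x = i then i + 1 else if x = i + 1 then i - 1 else x)).getD (π.idxOf (i + 1)) 0 = i - 1 := by
        rw [InvPrf.getD_map _ _ _ (by omega), hvr]
        beta_reduce
        split_ifs <;> omega
      have m_pq : InvPrf.ind (π.map (fun x => if x = i - 1 then i else if x = i then i + 1 else if x = i + 1 then i - 1 else x)) (π.idxOf (i - 1)) (π.idxOf i) = 0 := by
        rw [InvPrf.ind, mvq, mvp, if_neg (by omega)]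
      have m_qp : InvPrf.ind (π.map (fun x => if x = i - 1 then i else if x = i then i + 1 else if x = i + 1 then i - 1 else x)) (π.idxOf i) (π.idxOf (i - 1)) = 1 := by
        rw [InvPrf.ind, mvp, mvq, if_pos (by omega)]
      have m_pr : InvPrf.ind (π.map (fun x => if x = i - 1 then i else if x = i then i + 1 else if x = i + 1 then i - 1 else x)) (π.idxOf (i - 1)) (π.idxOf (i + 1)) = 1 := by
        rw [InvPrf.ind, mvr, mvp, if_pos (by omega)]
      have m_rp : InvPrf.ind (π.map (fun x => if x = i - 1 then i else if x = i then i + 1 else if x = i + 1 then i - 1 else x)) (π.idxOf (i + 1)) (π.idxOf (i - 1)) = 0 := by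
        rw [InvPrf.ind, mvp, mvr, if_neg (by omega)]
      have m_qr : InvPrf.ind (π.map (fun x => if x = i - 1 then i else if x = i then i + 1 else if x = i + 1 then i - 1 else x)) (π.idxOf i) (π.idxOf (i + 1)) = 1 := by
        rw [InvPrf.ind, mvr, mvq, if_pos (by omega)]
      have m_rq : InvPrf.ind (π.map (fun x => if x = i - 1 then i else if x = i then i + 1 else if x = i + 1 then i - 1 else x)) (π.idxOf (i + 1)) (π.idxOf i) = 0 := by
        rw [InvPrf.ind, mvq, mvr, if_neg (by omega)]
      rw [InvPrf.sum9 hpq hpr hqr (fun u v => InvPrf.Nc δ u v * InvPrf.ind π u v),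
        InvPrf.sum9 hpq hpr hqr (fun u v => InvPrf.Nc δ u v * InvPrf.ind (π.map (fun x => if x = i - 1 then i else if x = i then i + 1 else if x = i + 1 then i - 1 else x)) u v)]
      simp only [e_pq, e_qp, e_pr, e_rp, e_qr, e_rq, m_pq, m_qp, m_pr, m_rp, m_qr, m_rq,
        InvPrf.ind_self, mul_zero, mul_one, add_zero, zero_add]
      omega
  · rw [cycVals]
    refine InvPrf.branch_main δ hδ π hnd hlen i h1 _ ?_ ?_ ?_ hp hq hr ?_
    · intro x hx
      beta_reduce
      split_ifs <;> omega
    · intro x hx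
      beta_reduce
      constructor <;> split_ifs <;> omega
    · intro x y hxy
      simp only [] at hxy
      split_ifs at hxy <;> omega
    · obtain ⟨c, hcmem, hall⟩ := hPist
      have HPp := (hall (π.idxOf (i - 1)) (by simp)).2
      have HPq := (hall (π.idxOf i) (by simp)).2
      have HPr := (hall (π.idxOf (i + 1)) (by simp)).2
      have hPQ : π.idxOf (i - 1) < π.idxOf i := by omega
      have hRQ : π.idxOf (i + 1) < π.idxOf i := by omega
      have hRP : π.idxOf (i + 1) < π.idxOf (i - 1) := by omega
      obtain ⟨n1, n2⟩ := InvPrf.Nc_pistol δ hδ hRP hp hq (Or.inr hPQ) HPr HPp HPq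
      obtain ⟨n3, n4⟩ := InvPrf.Nc_pistol δ hδ hPQ hq hr (Or.inl hRP) HPp HPq HPr
      have mvp : (π.map (fun x => if x = i + 1 then i else if x = i then i - 1 else if x = i - 1 then i + 1 else x)).getD (π.idxOf (i - 1)) 0 = i + 1 := by
        rw [InvPrf.getD_map _ _ _ (by omega), hvp]
        beta_reduce
        split_ifs <;> omega
      have mvq : (π.map (fun x => if x = i + 1 then i else if x = i then i - 1 else if x = i - 1 then i + 1 else x)).getD (π.idxOf i) 0 = i - 1 := by
        rw [InvPrf.getD_map _ _ _ (by omega), hvq]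
        beta_reduce
        split_ifs <;> omega
      have mvr : (π.map (fun x => if x = i + 1 then i else if x = i then i - 1 else if x = i - 1 then i + 1 else x)).getD (π.idxOf (i + 1)) 0 = i := by
        rw [InvPrf.getD_map _ _ _ (by omega), hvr]
        beta_reduce
        split_ifs <;> omega
      have m_pq : InvPrf.ind (π.map (fun x => if x = i + 1 then i else if x = i then i - 1 else if x = i - 1 then i + 1 else x)) (π.idxOf (i - 1)) (π.idxOf i) = 1 := by
        rw [InvPrf.ind, mvq, mvp, if_pos (by omega)]
      have m_qp : InvPrf.ind (π.map (fun x => if x = i + 1 then i else if x = i then i - 1 else if x = i - 1 then i + 1 else x)) (π.idxOf i) (π.idxOf (i - 1)) = 0 := by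
        rw [InvPrf.ind, mvp, mvq, if_neg (by omega)]
      have m_pr : InvPrf.ind (π.map (fun x => if x = i + 1 then i else if x = i then i - 1 else if x = i - 1 then i + 1 else x)) (π.idxOf (i - 1)) (π.idxOf (i + 1)) = 1 := by
        rw [InvPrf.ind, mvr, mvp, if_pos (by omega)]
      have m_rp : InvPrf.ind (π.map (fun x => if x = i + 1 then i else if x = i then i - 1 else if x = i - 1 then i + 1 else x)) (π.idxOf (i + 1)) (π.idxOf (i - 1)) = 0 := by
        rw [InvPrf.ind, mvp, mvr, if_neg (by omega)]
      have m_qr : InvPrf.ind (π.map (fun x => if x = i + 1 then i else if x = i then i - 1 else if x = i - 1 then i + 1 else x)) (π.idxOf i) (π.idxOf (i + 1)) = 0 := by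
        rw [InvPrf.ind, mvr, mvq, if_neg (by omega)]
      have m_rq : InvPrf.ind (π.map (fun x => if x = i + 1 then i else if x = i then i - 1 else if x = i - 1 then i + 1 else x)) (π.idxOf (i + 1)) (π.idxOf i) = 1 := by
        rw [InvPrf.ind, mvq, mvr, if_pos (by omega)]
      rw [InvPrf.sum9 hpq hpr hqr (fun u v => InvPrf.Nc δ u v * InvPrf.ind π u v),
        InvPrf.sum9 hpq hpr hqr (fun u v => InvPrf.Nc δ u v * InvPrf.ind (π.map (fun x => if x = i + 1 then i else if x = i then i - 1 else if x = i - 1 then i + 1 else x)) u v)]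
      simp only [e_pq, e_qp, e_pr, e_rp, e_qr, e_rq, m_pq, m_qp, m_pr, m_rp, m_qr, m_rq,
        InvPrf.ind_self, mul_zero, mul_one, add_zero, zero_add]
      omega
  · rfl
  · rw [swapVals]
    refine InvPrf.branch_main δ hδ π hnd hlen i h1 _ ?_ ?_ ?_ hp hq hr ?_
    · intro x hx
      beta_reduce
      split_ifs <;> omega
    · intro x hx
      beta_reduce
      constructor <;> split_ifs <;> omega
    · intro x y hxy
      simp only [] at hxy
      split_ifs at hxy <;> omega
    · have hz : InvPrf.Nc δ (π.idxOf i) (π.idxOf (i + 1)) = 0 ∧ InvPrf.Nc δ (π.idxOf (i + 1)) (π.idxOf i) = 0 := by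
        rcases hB' with ⟨ha, hb⟩ | ⟨ha, hb⟩
        · exact InvPrf.Nc_outer δ hδ (show π.idxOf i < π.idxOf (i + 1) by omega) hr (by
          intro s hs
          simp only [List.mem_cons, List.not_mem_nil, or_false] at hs
          rcases hs with rfl | rfl | rfl <;> omega) hPist
        · exact (InvPrf.Nc_outer δ hδ (show π.idxOf (i + 1) < π.idxOf i by omega) hq (by
          intro s hs
          simp only [List.mem_cons, List.not_mem_nil, or_false] at hs
          rcases hs with rfl | rfl | rfl <;> omega) hPist).symm
      obtain ⟨n1, n2⟩ := hz
      have mvp : (π.map (fun x => if x = i then i + 1 else if x = i + 1 then i else x)).getD (π.idxOf (i - 1)) 0 = i - 1 := by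
        rw [InvPrf.getD_map _ _ _ (by omega), hvp]
        beta_reduce
        split_ifs <;> omega
      have mvq : (π.map (fun x => if x = i then i + 1 else if x = i + 1 then i else x)).getD (π.idxOf i) 0 = i + 1 := by
        rw [InvPrf.getD_map _ _ _ (by omega), hvq]
        beta_reduce
        split_ifs <;> omega
      have mvr : (π.map (fun x => if x = i then i + 1 else if x = i + 1 then i else x)).getD (π.idxOf (i + 1)) 0 = i := by
        rw [InvPrf.getD_map _ _ _ (by omega), hvr]
        beta_reduce
        split_ifs <;> omega
      have m_pq : InvPrf.ind (π.map (fun x => if x = i then i + 1 else if x = i + 1 then i else x)) (π.idxOf (i - 1)) (π.idxOf i) = 0 := by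
        rw [InvPrf.ind, mvq, mvp, if_neg (by omega)]
      have m_qp : InvPrf.ind (π.map (fun x => if x = i then i + 1 else if x = i + 1 then i else x)) (π.idxOf i) (π.idxOf (i - 1)) = 1 := by
        rw [InvPrf.ind, mvp, mvq, if_pos (by omega)]
      have m_pr : InvPrf.ind (π.map (fun x => if x = i then i + 1 else if x = i + 1 then i else x)) (π.idxOf (i - 1)) (π.idxOf (i + 1)) = 0 := by
        rw [InvPrf.ind, mvr, mvp, if_neg (by omega)]
      have m_rp : InvPrf.ind (π.map (fun x => if x = i then i + 1 else if x = i + 1 then i else x)) (π.idxOf (i + 1)) (π.idxOf (i - 1)) = 1 := by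
        rw [InvPrf.ind, mvp, mvr, if_pos (by omega)]
      have m_qr : InvPrf.ind (π.map (fun x => if x = i then i + 1 else if x = i + 1 then i else x)) (π.idxOf i) (π.idxOf (i + 1)) = 1 := by
        rw [InvPrf.ind, mvr, mvq, if_pos (by omega)]
      have m_rq : InvPrf.ind (π.map (fun x => if x = i then i + 1 else if x = i + 1 then i else x)) (π.idxOf (i + 1)) (π.idxOf i) = 0 := by
        rw [InvPrf.ind, mvq, mvr, if_neg (by omega)]
      rw [InvPrf.sum9 hpq hpr hqr (fun u v => InvPrf.Nc δ u v * InvPrf.ind π u v),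
        InvPrf.sum9 hpq hpr hqr (fun u v => InvPrf.Nc δ u v * InvPrf.ind (π.map (fun x => if x = i then i + 1 else if x = i + 1 then i else x)) u v)]
      simp only [e_pq, e_qp, e_pr, e_rp, e_qr, e_rq, m_pq, m_qp, m_pr, m_rp, m_qr, m_rq,
        InvPrf.ind_self, mul_zero, mul_one, add_zero, zero_add]
      omega
  · rw [swapVals]
    refine InvPrf.branch_main δ hδ π hnd hlen i h1 _ ?_ ?_ ?_ hp hq hr ?_
    · intro x hx
      beta_reduce
      split_ifs <;> omega
    · intro x hx
      beta_reduce
      constructor <;> split_ifs <;> omega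
    · intro x y hxy
      simp only [] at hxy
      split_ifs at hxy <;> omega
    · have hmid : (π.idxOf (i - 1) < π.idxOf (i + 1) ∧ π.idxOf (i + 1) < π.idxOf i) ∨ (π.idxOf i < π.idxOf (i + 1) ∧ π.idxOf (i + 1) < π.idxOf (i - 1)) := by omega
      have hz : InvPrf.Nc δ (π.idxOf (i - 1)) (π.idxOf i) = 0 ∧ InvPrf.Nc δ (π.idxOf i) (π.idxOf (i - 1)) = 0 := by
        rcases hmid with ⟨ha, hb⟩ | ⟨ha, hb⟩
        · exact InvPrf.Nc_outer δ hδ (show π.idxOf (i - 1) < π.idxOf i by omega) hq (by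
          intro s hs
          simp only [List.mem_cons, List.not_mem_nil, or_false] at hs
          rcases hs with rfl | rfl | rfl <;> omega) hPist
        · exact (InvPrf.Nc_outer δ hδ (show π.idxOf i < π.idxOf (i - 1) by omega) hp (by
          intro s hs
          simp only [List.mem_cons, List.not_mem_nil, or_false] at hs
          rcases hs with rfl | rfl | rfl <;> omega) hPist).symm
      obtain ⟨n1, n2⟩ := hz
      have mvp : (π.map (fun x => if x = i then i - 1 else if x = i - 1 then i else x)).getD (π.idxOf (i - 1)) 0 = i := by
        rw [InvPrf.getD_map _ _ _ (by omega), hvp]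
        beta_reduce
        split_ifs <;> omega
      have mvq : (π.map (fun x => if x = i then i - 1 else if x = i - 1 then i else x)).getD (π.idxOf i) 0 = i - 1 := by
        rw [InvPrf.getD_map _ _ _ (by omega), hvq]
        beta_reduce
        split_ifs <;> omega
      have mvr : (π.map (fun x => if x = i then i - 1 else if x = i - 1 then i else x)).getD (π.idxOf (i + 1)) 0 = i + 1 := by
        rw [InvPrf.getD_map _ _ _ (by omega), hvr]
        beta_reduce
        split_ifs <;> omega
      have m_pq : InvPrf.ind (π.map (fun x => if x = i then i - 1 else if x = i - 1 then i else x)) (π.idxOf (i - 1)) (π.idxOf i) = 1 := by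
        rw [InvPrf.ind, mvq, mvp, if_pos (by omega)]
      have m_qp : InvPrf.ind (π.map (fun x => if x = i then i - 1 else if x = i - 1 then i else x)) (π.idxOf i) (π.idxOf (i - 1)) = 0 := by
        rw [InvPrf.ind, mvp, mvq, if_neg (by omega)]
      have m_pr : InvPrf.ind (π.map (fun x => if x = i then i - 1 else if x = i - 1 then i else x)) (π.idxOf (i - 1)) (π.idxOf (i + 1)) = 0 := by
        rw [InvPrf.ind, mvr, mvp, if_neg (by omega)]
      have m_rp : InvPrf.ind (π.map (fun x => if x = i then i - 1 else if x = i - 1 then i else x)) (π.idxOf (i + 1)) (π.idxOf (i - 1)) = 1 := by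
        rw [InvPrf.ind, mvp, mvr, if_pos (by omega)]
      have m_qr : InvPrf.ind (π.map (fun x => if x = i then i - 1 else if x = i - 1 then i else x)) (π.idxOf i) (π.idxOf (i + 1)) = 0 := by
        rw [InvPrf.ind, mvr, mvq, if_neg (by omega)]
      have m_rq : InvPrf.ind (π.map (fun x => if x = i then i - 1 else if x = i - 1 then i else x)) (π.idxOf (i + 1)) (π.idxOf i) = 1 := by
        rw [InvPrf.ind, mvq, mvr, if_pos (by omega)]
      rw [InvPrf.sum9 hpq hpr hqr (fun u v => InvPrf.Nc δ u v * InvPrf.ind π u v),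
        InvPrf.sum9 hpq hpr hqr (fun u v => InvPrf.Nc δ u v * InvPrf.ind (π.map (fun x => if x = i then i - 1 else if x = i - 1 then i else x)) u v)]
      simp only [e_pq, e_qp, e_pr, e_rp, e_qr, e_rq, m_pq, m_qp, m_pr, m_rp, m_qr, m_rq,
        InvPrf.ind_self, mul_zero, mul_one, add_zero, zero_add]
      omega
end

section
/- If π ∈ S_n is contained in an i/(i+1)-double edge of the Assaf graph H_δ (i.e., D_i^δ(π) = D_{i+1}^δ(π) ≠ π), then this common image is obtained from π by swapping the positions of the values i and i+1, and the indices of i and i+1 in π are not δ-pistoled. -/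
open scoped Classical

section DoubleEdgeAux

lemma RO_trans' {a b c : ℤ × ℤ} (h1 : ReadingOrder a b) (h2 : ReadingOrder b c) :
    ReadingOrder a c := by
  unfold ReadingOrder at *
  omega

lemma leRO_of_leRO_RO {a b c : ℤ × ℤ} (h1 : leRO a b) (h2 : ReadingOrder b c) : leRO a c := by
  rcases h1 with rfl | h1
  · exact Or.inr h2
  · exact Or.inr (RO_trans' h1 h2)

lemma leRO_of_RO_leRO {a b c : ℤ × ℤ} (h1 : ReadingOrder a b) (h2 : leRO b c) : leRO a c := by
  rcases h2 with rfl | h2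
  · exact Or.inr h1
  · exact Or.inr (RO_trans' h1 h2)

lemma sorted_getD_RO {δ : List (ℤ × ℤ)} (hδ : IsDiagramList δ) {j k : ℕ}
    (hjk : j < k) (hk : k < δ.length) :
    ReadingOrder (δ.getD j (0,0)) (δ.getD k (0,0)) := by
  rw [List.getD_eq_getElem _ _ (lt_trans hjk hk), List.getD_eq_getElem _ _ hk]
  exact List.pairwise_iff_getElem.1 hδ j k (lt_trans hjk hk) hk hjk

lemma getD_map_indexOf {w : List ℕ} {v : ℕ} (hv : v ∈ w) (f : ℕ → ℕ) :
    (w.map f).getD (w.idxOf v) 0 = f v := by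
  have h : w.idxOf v < w.length := List.idxOf_lt_length_iff.2 hv
  rw [List.getD_eq_getElem _ _ (by simpa using h), List.getElem_map, List.getElem_idxOf]

lemma Ddelta_fix (δ : List (ℤ × ℤ)) (j : ℕ) (w : List ℕ) {v : ℕ} (hv : v ∈ w)
    (h1 : v ≠ j - 1) (h2 : v ≠ j) (h3 : v ≠ j + 1) :
    (Ddelta δ j w).getD (w.idxOf v) 0 = v := by
  have base : w.getD (w.idxOf v) 0 = v := by
    have := getD_map_indexOf hv id
    simpa using this
  simp only [Ddelta, delem, dtil]
  split_ifs
  all_goals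
    first
      | exact base
      | (simp only [swapVals, cycVals, getD_map_indexOf hv]
         simp [h1, h2, h3])

end DoubleEdgeAux

-- STATEMENT 12
theorem double_edge_swap (δ : List (ℤ × ℤ)) (hδ : IsDiagramList δ) (i : ℕ)
    (π : List ℕ) (hπ : π.Perm (List.range' 1 δ.length))
    (h1 : 1 < i) (h2 : i + 1 < δ.length)
    (hdbl : Ddelta δ i π = Ddelta δ (i + 1) π) (hne : Ddelta δ i π ≠ π) :
    Ddelta δ i π = swapVals i (i + 1) π ∧
    ¬ Pistoled δ [π.idxOf i, π.idxOf (i + 1)] := by 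
  have hlen : π.length = δ.length := by simpa using hπ.length_eq
  have hmem : ∀ v, 1 ≤ v → v ≤ δ.length → v ∈ π := by
    intro v hv1 hv2
    apply hπ.mem_iff.2
    rw [List.mem_range'_1]
    omega
  have hm1 : (i - 1) ∈ π := hmem _ (by omega) (by omega)
  have hmi : i ∈ π := hmem _ (by omega) (by omega)
  have hm2 : (i + 1) ∈ π := hmem _ (by omega) (by omega)
  have hp : π.idxOf (i - 1) < δ.length := hlen ▸ List.idxOf_lt_length_iff.2 hm1
  have hA : (Ddelta δ i π).getD (π.idxOf (i - 1)) 0 = i - 1 := by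
    rw [hdbl]
    exact Ddelta_fix δ (i + 1) π hm1 (by omega) (by omega) (by omega)
  by_cases hP1 : Pistoled δ [π.idxOf (i - 1), π.idxOf i, π.idxOf (i + 1)]
  · exfalso
    rw [Ddelta, if_pos hP1] at hA hne
    simp only [dtil] at hA hne
    split_ifs at hA hne <;>
      first
        | exact hne rfl
        | (simp only [cycVals, getD_map_indexOf hm1] at hA; split_ifs at hA <;> omega)
  · rw [Ddelta, if_neg hP1] at hA hne ⊢
    simp only [delem] at hA hne ⊢
    split_ifs at hA hne ⊢ with hc1 hc2
    · exact absurd rfl hne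
    · refine ⟨rfl, ?_⟩
      rintro ⟨c, hcδ, hall⟩
      apply hP1
      refine ⟨c, hcδ, ?_⟩
      have hq' := hall (π.idxOf i) (by simp)
      have hr' := hall (π.idxOf (i + 1)) (by simp)
      intro j hj
      have hInP : InPistol c (δ.getD (π.idxOf (i - 1)) (0, 0)) := by
        rcases hc2 with ⟨hqp, hpr⟩ | ⟨hrp, hpq⟩
        · constructor
          · exact leRO_of_leRO_RO hq'.2.1 (sorted_getD_RO hδ hqp hp)
          · exact leRO_of_RO_leRO (sorted_getD_RO hδ hpr hr'.1) hr'.2.2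
        · constructor
          · exact leRO_of_leRO_RO hr'.2.1 (sorted_getD_RO hδ hrp hp)
          · exact leRO_of_RO_leRO (sorted_getD_RO hδ hpq hq'.1) hq'.2.2
      simp only [List.mem_cons, List.not_mem_nil, or_false] at hj
      rcases hj with rfl | rfl | rfl
      · exact ⟨hp, hInP⟩
      · exact hq'
      · exact hr'
    · exfalso
      simp only [swapVals, getD_map_indexOf hm1] at hA
      split_ifs at hA <;> omega
end

section
/- Let T be a standard filling of a diagram δ whose row reading word π contains one of the strict patterns 1342 or 2431 occurring at δ-pistoled indices, or one of 12543 or 34521 at indices i_1 < ... < i_5 with both {i_1,...,i_4} and {i_2,...,i_5} δ-pistoled but {i_1,...,i_5} not δ-pistoled. Then inv_δ(π) ≥ 1. -/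
open scoped Classical

/-- Geometry of a pistol: a cell in the pistol of `c` is either in `c`'s row, weakly
right of `c`, or in the row below, weakly left of `c`. -/
lemma pistol_geo {c e : ℤ × ℤ} (h : InPistol c e) :
    (e.2 = c.2 ∧ c.1 ≤ e.1) ∨ (e.2 = c.2 - 1 ∧ e.1 ≤ c.1) := by
  obtain ⟨h1, h2⟩ := h
  simp only [leRO, ReadingOrder, Prod.ext_iff] at h1 h2
  omega

lemma invD_pos_of_triple {δ : List (ℤ × ℤ)} {π : List ℕ} {j k : ℕ}
    (hj : j < δ.length) (hk : k < δ.length) (h : InvTripleAt δ π j k) :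
    1 ≤ invD δ π := by
  have h1 : 0 < ((Finset.range δ.length ×ˢ Finset.range δ.length).filter fun p =>
      InvTripleAt δ π p.1 p.2).card := by
    refine Finset.card_pos.mpr ⟨(j, k), ?_⟩
    simp only [Finset.mem_filter, Finset.mem_product, Finset.mem_range]
    exact ⟨⟨hj, hk⟩, h⟩
  unfold invD
  omega

lemma invD_pos_of_below {δ : List (ℤ × ℤ)} {π : List ℕ} {j k : ℕ}
    (hj : j < δ.length) (hk : k < δ.length) (h : InvPairBelowAt δ π j k) :
    1 ≤ invD δ π := by
  have h1 : 0 < ((Finset.range δ.length ×ˢ Finset.range δ.length).filter fun p =>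
      InvPairBelowAt δ π p.1 p.2).card := by
    refine Finset.card_pos.mpr ⟨(j, k), ?_⟩
    simp only [Finset.mem_filter, Finset.mem_product, Finset.mem_range]
    exact ⟨⟨hj, hk⟩, h⟩
  unfold invD
  omega

lemma invD_pos_of_above {δ : List (ℤ × ℤ)} {π : List ℕ} {j k : ℕ}
    (hj : j < δ.length) (hk : k < δ.length) (h : InvPairAboveAt δ π j k) :
    1 ≤ invD δ π := by
  have h1 : 0 < ((Finset.range δ.length ×ˢ Finset.range δ.length).filter fun p =>
      InvPairAboveAt δ π p.1 p.2).card := by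
    refine Finset.card_pos.mpr ⟨(j, k), ?_⟩
    simp only [Finset.mem_filter, Finset.mem_product, Finset.mem_range]
    exact ⟨⟨hj, hk⟩, h⟩
  unfold invD
  omega

/-- Key lemma: if a pistol contains three cells, at indices `s < u < v`, such that the
value at `u` is one more than the value at `v`, the filling has an inversion. -/
lemma key_lemma (δ : List (ℤ × ℤ)) (hδ : IsDiagramList δ)
    (π : List ℕ) (hπ : π.Perm (List.range' 1 δ.length))
    (c : ℤ × ℤ) (s u v : ℕ) (hsu : s < u) (huv : u < v)
    (hsn : s < δ.length) (hun : u < δ.length) (hvn : v < δ.length)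
    (hsp : InPistol c (δ.getD s (0,0)))
    (hup : InPistol c (δ.getD u (0,0)))
    (hvp : InPistol c (δ.getD v (0,0)))
    (hw : π.getD u 0 = π.getD v 0 + 1) :
    1 ≤ invD δ π := by
  have hπlen : π.length = δ.length := by simpa using hπ.length_eq
  have hnd : π.Nodup := hπ.nodup_iff.mpr (List.nodup_range' (s := 1) (n := δ.length))
  have hdist : ∀ a b : ℕ, a < δ.length → b < δ.length → a ≠ b →
      π.getD a 0 ≠ π.getD b 0 := by
    intro a b ha hb hab
    rw [List.getD_eq_getElem _ _ (hπlen ▸ ha), List.getD_eq_getElem _ _ (hπlen ▸ hb)]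
    intro h
    exact hab (hnd.getElem_inj_iff.mp h)
  have hRO : ∀ a b : ℕ, a < b → b < δ.length →
      ReadingOrder (δ.getD a (0,0)) (δ.getD b (0,0)) := by
    intro a b hab hb
    rw [List.getD_eq_getElem _ _ (lt_trans hab hb), List.getD_eq_getElem _ _ hb]
    exact List.pairwise_iff_getElem.mp (show δ.Pairwise ReadingOrder from hδ) a b (lt_trans hab hb) hb hab
  have gs := pistol_geo hsp
  have gu := pistol_geo hup
  have gv := pistol_geo hvp
  have rouv := hRO u v huv hvn
  have rosu := hRO s u hsu hun
  simp only [ReadingOrder] at rouv rosu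
  by_cases hrow : (δ.getD u (0,0)).2 = (δ.getD v (0,0)).2
  · -- same row
    have hx : (δ.getD u (0,0)).1 < (δ.getD v (0,0)).1 := by
      rcases rouv with h | h
      · omega
      · exact h.2
    by_cases hb : ((δ.getD u (0,0)).1, (δ.getD u (0,0)).2 - 1) ∈ δ
    · obtain ⟨m, hm, hcm⟩ := List.mem_iff_getElem.mp hb
      have hmD : δ.getD m (0,0) = ((δ.getD u (0,0)).1, (δ.getD u (0,0)).2 - 1) := by
        rw [List.getD_eq_getElem _ _ hm]; exact hcm
      have hm2 : (δ.getD m (0,0)).2 = (δ.getD u (0,0)).2 - 1 := by rw [hmD]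
      have hmu : m ≠ u := by intro h; rw [h] at hm2; omega
      have hmv : m ≠ v := by intro h; rw [h] at hm2; omega
      have d1 := hdist m u hm hun hmu
      have d2 := hdist m v hm hvn hmv
      exact invD_pos_of_triple hun hvn ⟨huv, hvn, hrow, m, hm, hmD, by omega⟩
    · exact invD_pos_of_below hun hvn ⟨huv, hvn, hrow, hb, by omega⟩
  · -- u in the top row, v in the bottom row
    have hru : (δ.getD u (0,0)).2 = c.2 ∧ c.1 ≤ (δ.getD u (0,0)).1 := by
      rcases gu with h | h
      · exact h
      · exfalso; rcases gv with h' | h' <;> rcases rouv with h'' | h'' <;> omega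
    obtain ⟨hru1, hru2⟩ := hru
    have hrv : (δ.getD v (0,0)).2 = c.2 - 1 ∧ (δ.getD v (0,0)).1 ≤ c.1 := by
      rcases gv with h' | h'
      · exfalso; omega
      · exact h'
    obtain ⟨hrv1, hrv2⟩ := hrv
    have hsx : c.1 < (δ.getD u (0,0)).1 := by
      rcases gs with h | h
      · rcases rosu with h'' | h'' <;> omega
      · exfalso; rcases rosu with h'' | h'' <;> omega
    have hxv : (δ.getD v (0,0)).1 < (δ.getD u (0,0)).1 := by omega
    by_cases ht : ((δ.getD v (0,0)).1, (δ.getD v (0,0)).2 + 1) ∈ δ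
    · obtain ⟨z, hz, hcz⟩ := List.mem_iff_getElem.mp ht
      have hzD : δ.getD z (0,0) = ((δ.getD v (0,0)).1, (δ.getD v (0,0)).2 + 1) := by
        rw [List.getD_eq_getElem _ _ hz]; exact hcz
      have hz1 : (δ.getD z (0,0)).1 = (δ.getD v (0,0)).1 := by rw [hzD]
      have hz2 : (δ.getD z (0,0)).2 = (δ.getD u (0,0)).2 := by
        rw [hzD]; show (δ.getD v (0,0)).2 + 1 = (δ.getD u (0,0)).2; omega
      have hzu : z ≠ u := by intro h; rw [h] at hz1; omega
      have hzv : z ≠ v := by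
        intro h; rw [h] at hz2; omega
      have hzltu : z < u := by
        rcases lt_trichotomy z u with h | h | h
        · exact h
        · exact absurd h hzu
        · exfalso
          have h5 := hRO u z h hz
          simp only [ReadingOrder] at h5
          rcases h5 with h' | h' <;> omega
      have d1 := hdist z u hz hun hzu
      have d2 := hdist z v hz hvn hzv
      refine invD_pos_of_triple hz hun ⟨hzltu, hun, hz2, v, hvn, ?_, ?_⟩
      · rw [hzD, Prod.ext_iff]
        refine ⟨rfl, ?_⟩
        show (δ.getD v (0,0)).2 = (δ.getD v (0,0)).2 + 1 - 1
        omega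
      · omega
    · exact invD_pos_of_above hun hvn ⟨hun, hvn, by omega, hxv, ht, by omega⟩

-- STATEMENT 13
theorem pattern_forces_inversion (δ : List (ℤ × ℤ)) (hδ : IsDiagramList δ)
    (π : List ℕ) (hπ : π.Perm (List.range' 1 δ.length))
    (hpat :
      (∃ idx : List ℕ,
        (StrictPatternAt [1, 3, 4, 2] π idx ∨ StrictPatternAt [2, 4, 3, 1] π idx) ∧
        Pistoled δ idx) ∨
      (∃ i₁ i₂ i₃ i₄ i₅ : ℕ, i₁ < i₂ ∧ i₂ < i₃ ∧ i₃ < i₄ ∧ i₄ < i₅ ∧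
        (StrictPatternAt [1, 2, 5, 4, 3] π [i₁, i₂, i₃, i₄, i₅] ∨
         StrictPatternAt [3, 4, 5, 2, 1] π [i₁, i₂, i₃, i₄, i₅]) ∧
        Pistoled δ [i₁, i₂, i₃, i₄] ∧ Pistoled δ [i₂, i₃, i₄, i₅] ∧
        ¬ Pistoled δ [i₁, i₂, i₃, i₄, i₅])) :
    1 ≤ invD δ π := by
  rcases hpat with ⟨idx, hp, hpist⟩ | ⟨i₁, i₂, i₃, i₄, i₅, h12, h23, h34, h45, hp, hpist1, hpist2, hnp⟩
  · obtain ⟨c, hcδ, hall⟩ := hpist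
    have hL : idx.length = 4 := by
      rcases hp with ⟨_, _, h, _⟩ | ⟨_, _, h, _⟩ <;> simpa using h
    have hsort : idx.Pairwise (· < ·) := by
      rcases hp with ⟨h, _⟩ | ⟨h, _⟩ <;> exact h
    have hord : ∀ a b : ℕ, a < b → b < 4 → idx.getD a 0 < idx.getD b 0 := by
      intro a b hab hb
      rw [List.getD_eq_getElem _ _ (by omega), List.getD_eq_getElem _ _ (by omega)]
      exact List.pairwise_iff_getElem.mp hsort a b (by omega) (by omega) hab
    have hmem' : ∀ j : ℕ, j < 4 → idx.getD j 0 ∈ idx := by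
      intro j hj
      rw [List.getD_eq_getElem _ _ (by omega)]
      exact List.getElem_mem _
    obtain ⟨hb0, hp0⟩ := hall _ (hmem' 0 (by norm_num))
    obtain ⟨hb1, hp1⟩ := hall _ (hmem' 1 (by norm_num))
    obtain ⟨hb2, hp2⟩ := hall _ (hmem' 2 (by norm_num))
    obtain ⟨hb3, hp3⟩ := hall _ (hmem' 3 (by norm_num))
    rcases hp with ⟨_, _, _, k, hval⟩ | ⟨_, _, _, k, hval⟩
    · -- 1342 : use indices at positions 0, 1, 3
      have e1 := hval 1 (by norm_num)
      have e3 := hval 3 (by norm_num)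
      simp only [List.getD_cons_succ, List.getD_cons_zero] at e1 e3
      exact key_lemma δ hδ π hπ c _ _ _ (hord 0 1 (by norm_num) (by norm_num))
        (hord 1 3 (by norm_num) (by norm_num)) hb0 hb1 hb3 hp0 hp1 hp3 (by omega)
    · -- 2431 : use indices at positions 0, 1, 2
      have e1 := hval 1 (by norm_num)
      have e2 := hval 2 (by norm_num)
      simp only [List.getD_cons_succ, List.getD_cons_zero] at e1 e2
      exact key_lemma δ hδ π hπ c _ _ _ (hord 0 1 (by norm_num) (by norm_num))
        (hord 1 2 (by norm_num) (by norm_num)) hb0 hb1 hb2 hp0 hp1 hp2 (by omega)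
  · obtain ⟨c, hcδ, hall⟩ := hpist2
    obtain ⟨hb2, hp2⟩ := hall i₂ (by simp)
    obtain ⟨hb3, hp3⟩ := hall i₃ (by simp)
    obtain ⟨hb4, hp4⟩ := hall i₄ (by simp)
    obtain ⟨hb5, hp5⟩ := hall i₅ (by simp)
    rcases hp with ⟨_, _, _, k, hval⟩ | ⟨_, _, _, k, hval⟩
    · -- 12543 : use i₂ < i₃ < i₄, values 5+k, 4+k
      have e2 := hval 2 (by norm_num)
      have e3 := hval 3 (by norm_num)
      simp only [List.getD_cons_succ, List.getD_cons_zero] at e2 e3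
      exact key_lemma δ hδ π hπ c _ _ _ h23 h34 hb2 hb3 hb4 hp2 hp3 hp4 (by omega)
    · -- 34521 : use i₂ < i₄ < i₅, values 2+k, 1+k
      have e3 := hval 3 (by norm_num)
      have e4 := hval 4 (by norm_num)
      simp only [List.getD_cons_succ, List.getD_cons_zero] at e3 e4
      exact key_lemma δ hδ π hπ c _ _ _ (lt_trans h23 h34) h45 hb2 hb4 hb5 hp2 hp4 hp5
        (by omega)
end
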